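/- arXiv:0705.2526 — 10 statements merged into one kernel-verified Lean document; each statement's English description precedes it below -/
import Mathlib

section
/- Let X be a real Banach space, let x be a point of the unit sphere of X, and let g be a norm-one functional with g(x)=1. If (x_n) is a sequence in the closed unit ball with x in the closed convex hull of {x_n}, then there exists a subsequence (y_j) of (x_n) (as a sequence of values chosen from the x_n) such that g(y_j) → 1 as j → ∞ and x lies in the closed convex hull of {y_j : j ≥ l} for every l ∈ ℕ. -/
open Filter Topology


set_option maxHeartbeats 1000000 in
lemma slice_lemma {X : Type*} [NormedAddCommGroup X] [NormedSpace ℝ X]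
    (x : X) (g : X →L[ℝ] ℝ) (hg : ‖g‖ = 1) (hgx : g x = 1)
    (xs : ℕ → X) (hxs : ∀ n, ‖xs n‖ ≤ 1)
    (hmem : x ∈ closure (convexHull ℝ (Set.range xs)))
    {ε : ℝ} (hε : 0 < ε) :
    x ∈ closure (convexHull ℝ {v | (∃ n, v = xs n) ∧ 1 - ε < g v}) := by
  classical
  rw [Metric.mem_closure_iff] at hmem ⊢
  intro δ hδ
  set η : ℝ := min (δ * ε / (2 * (ε + 2))) (ε / 2) with hηdef
  have hη : 0 < η := by
    apply lt_min
    · positivity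
    · positivity
  obtain ⟨z, hz, hdz⟩ := hmem η hη
  rw [convexHull_eq] at hz
  obtain ⟨ι, t, w, v, hw0, hw1, hvs, rfl⟩ := hz
  set z := t.centerMass w v with hzdef
  -- basic facts about the points
  have hv1 : ∀ i ∈ t, ‖v i‖ ≤ 1 := by
    intro i hi
    obtain ⟨n, hn⟩ := hvs i hi
    rw [← hn]; exact hxs n
  have hgv1 : ∀ i ∈ t, g (v i) ≤ 1 := by
    intro i hi
    have := (g.le_opNorm (v i))
    rw [hg, one_mul, Real.norm_eq_abs] at this
    have := abs_le.1 this
    linarith [this.2, hv1 i hi]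
  have hzsum : z = ∑ i ∈ t, w i • v i := Finset.centerMass_eq_of_sum_1 _ _ hw1
  have hgz_eq : g z = ∑ i ∈ t, w i * g (v i) := by
    rw [hzsum, map_sum]; simp [smul_eq_mul]
  have hgz : 1 - η < g z := by
    have h1 : |g x - g z| ≤ ‖x - z‖ := by
      rw [← map_sub]
      have := g.le_opNorm (x - z)
      rwa [hg, one_mul, Real.norm_eq_abs] at this
    have h2 : ‖x - z‖ < η := by rwa [dist_eq_norm] at hdz
    have h3 : g x - g z < η := lt_of_le_of_lt ((le_abs_self _).trans h1) h2
    rw [hgx] at h3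
    linarith
  set B := t.filter (fun i => 1 - ε < g (v i)) with hBdef
  set C := t.filter (fun i => ¬ (1 - ε < g (v i))) with hCdef
  set μ := ∑ i ∈ C, w i with hμdef
  set sB := ∑ i ∈ B, w i with hsBdef
  have hBt : B ⊆ t := Finset.filter_subset _ _
  have hCt : C ⊆ t := Finset.filter_subset _ _
  have hws : sB + μ = 1 := by
    rw [hsBdef, hμdef, hBdef, hCdef, Finset.sum_filter_add_sum_filter_not, hw1]
  have hμ0 : 0 ≤ μ := Finset.sum_nonneg fun i hi => hw0 i (hCt hi)
  have hsB0 : 0 ≤ sB := Finset.sum_nonneg fun i hi => hw0 i (hBt hi)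
  -- g z ≤ sB + μ * (1 - ε)
  have hgz_le : g z ≤ sB + μ * (1 - ε) := by
    rw [hgz_eq, ← Finset.sum_filter_add_sum_filter_not t (fun i => 1 - ε < g (v i))]
    gcongr ?_ + ?_
    · calc ∑ i ∈ B, w i * g (v i) ≤ ∑ i ∈ B, w i * 1 := by
            apply Finset.sum_le_sum
            intro i hi
            exact mul_le_mul_of_nonneg_left (hgv1 i (hBt hi)) (hw0 i (hBt hi))
        _ = sB := by simp [hsBdef]
    · calc ∑ i ∈ C, w i * g (v i) ≤ ∑ i ∈ C, w i * (1 - ε) := by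
            apply Finset.sum_le_sum
            intro i hi
            have hgvi : g (v i) ≤ 1 - ε := by
              have := (Finset.mem_filter.1 hi).2
              linarith [not_lt.1 this]
            exact mul_le_mul_of_nonneg_left hgvi (hw0 i (hCt hi))
        _ = μ * (1 - ε) := by rw [hμdef, Finset.sum_mul]
  have hμε : μ * ε < η := by nlinarith [hgz, hgz_le, hws]
  have hημ : η ≤ ε / 2 := min_le_right _ _
  have hμhalf : μ < 1 / 2 := by nlinarith
  have hsBpos : 0 < sB := by nlinarith
  set z' := B.centerMass w v with hz'def
  have hz'mem : z' ∈ convexHull ℝ {v | (∃ n, v = xs n) ∧ 1 - ε < g v} := by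
    apply Finset.centerMass_mem_convexHull
    · intro i hi; exact hw0 i (hBt hi)
    · rwa [← hsBdef]
    · intro i hi
      obtain ⟨hit, hgi⟩ := Finset.mem_filter.1 hi
      obtain ⟨n, hn⟩ := hvs i hit
      exact ⟨⟨n, hn.symm⟩, hgi⟩
  -- norm estimates
  set u := ∑ i ∈ B, w i • v i with hudef
  set r := ∑ i ∈ C, w i • v i with hrdef
  have hzur : z = u + r := by
    rw [hzsum, hudef, hrdef, hBdef, hCdef, Finset.sum_filter_add_sum_filter_not]
  have hz'u : z' = sB⁻¹ • u := by
    rw [hz'def, Finset.centerMass, ← hsBdef, ← hudef]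
  have hu : ‖u‖ ≤ sB := by
    calc ‖u‖ ≤ ∑ i ∈ B, ‖w i • v i‖ := norm_sum_le _ _
      _ ≤ ∑ i ∈ B, w i := by
          apply Finset.sum_le_sum
          intro i hi
          rw [norm_smul, Real.norm_eq_abs, abs_of_nonneg (hw0 i (hBt hi))]
          nlinarith [hv1 i (hBt hi), hw0 i (hBt hi), norm_nonneg (v i)]
      _ = sB := rfl
  have hr : ‖r‖ ≤ μ := by
    calc ‖r‖ ≤ ∑ i ∈ C, ‖w i • v i‖ := norm_sum_le _ _
      _ ≤ ∑ i ∈ C, w i := by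
          apply Finset.sum_le_sum
          intro i hi
          rw [norm_smul, Real.norm_eq_abs, abs_of_nonneg (hw0 i (hCt hi))]
          nlinarith [hv1 i (hCt hi), hw0 i (hCt hi), norm_nonneg (v i)]
      _ = μ := rfl
  have hsBinv : sB⁻¹ * sB = 1 := inv_mul_cancel₀ (ne_of_gt hsBpos)
  have hsBle1 : sB ≤ 1 := by linarith
  have hinvge1 : 1 ≤ sB⁻¹ := by
    rw [le_inv_comm₀ one_pos hsBpos] ; simpa using hsBle1
  have hzz' : ‖z - z'‖ ≤ 2 * μ := by
    have : z - z' = r + (1 - sB⁻¹) • u := by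
      rw [hzur, hz'u, sub_smul, one_smul]; abel
    rw [this]
    calc ‖r + (1 - sB⁻¹) • u‖ ≤ ‖r‖ + ‖(1 - sB⁻¹) • u‖ := norm_add_le _ _
      _ = ‖r‖ + (sB⁻¹ - 1) * ‖u‖ := by
          rw [norm_smul, Real.norm_eq_abs, abs_of_nonpos (by linarith)]; ring_nf
      _ ≤ μ + (sB⁻¹ - 1) * sB := by
          gcongr
      _ = μ + (1 - sB) := by rw [sub_mul, hsBinv, one_mul]
      _ = 2 * μ := by linarith
  refine ⟨z', hz'mem, ?_⟩
  have htri : dist x z' ≤ dist x z + ‖z - z'‖ := by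
    rw [← dist_eq_norm]; exact dist_triangle _ _ _
  have hη1 : η ≤ δ * ε / (2 * (ε + 2)) := min_le_left _ _
  have key : η + 2 * μ < δ := by
    have hD : η * (2 * (ε + 2)) ≤ δ * ε :=
      (le_div_iff₀ (by positivity : (0:ℝ) < 2 * (ε + 2))).1 hη1
    have hδε : 0 < δ * ε := lt_of_lt_of_le (by nlinarith : (0:ℝ) < η * (2 * (ε + 2))) hD
    have h5 : ε * (η + 2 * μ) < δ * ε := by nlinarith
    have h6 : ε * (η + 2 * μ) < ε * δ := by linarith
    exact (mul_lt_mul_iff_right₀ hε).1 h6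
  calc dist x z' ≤ dist x z + ‖z - z'‖ := htri
    _ < η + 2 * μ := by linarith [hdz, hzz']
    _ < δ := key



lemma finpick {X : Type*} [NormedAddCommGroup X] [NormedSpace ℝ X]
    (x : X) (S : Set X) (hS : x ∈ closure (convexHull ℝ S)) {δ : ℝ} (hδ : 0 < δ) :
    ∃ (m : ℕ) (q : ℕ → X), 0 < m ∧ (∀ i, q i ∈ S) ∧ (∀ i, q (i % m) = q i) ∧
      ∃ z ∈ convexHull ℝ (Set.range q), dist x z < δ := by
  classical
  rw [Metric.mem_closure_iff] at hS
  obtain ⟨z, hz, hdz⟩ := hS δ hδ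
  rw [convexHull_eq_union_convexHull_finite_subsets] at hz
  simp only [Set.mem_iUnion] at hz
  obtain ⟨t, hts, hzt⟩ := hz
  have htne : t.Nonempty := by
    rcases t.eq_empty_or_nonempty with h | h
    · exfalso
      rw [h] at hzt
      simp at hzt
    · exact h
  set L := t.toList with hL
  have hm : 0 < L.length := by
    rw [hL, Finset.length_toList]
    exact Finset.card_pos.2 htne
  set m := L.length with hmdef
  refine ⟨m, fun i => L.get ⟨i % m, Nat.mod_lt _ hm⟩, hm, ?_, ?_, z, ?_, hdz⟩
  · intro i
    apply hts
    have h1 : L.get ⟨i % m, Nat.mod_lt _ hm⟩ ∈ L := List.get_mem _ _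
    rw [Finset.mem_coe, ← Finset.mem_toList]
    exact h1
  · intro i
    exact congrArg L.get (Fin.ext (Nat.mod_mod_of_dvd i (dvd_refl m)))
  · apply convexHull_mono _ hzt
    intro a ha
    rw [Finset.mem_coe, ← Finset.mem_toList, ← hL] at ha
    obtain ⟨idx, hidx⟩ := List.get_of_mem ha
    refine ⟨idx.val, ?_⟩
    have : idx.val % m = idx.val := Nat.mod_eq_of_lt idx.isLt
    simp only [this]
    rw [← hidx]


set_option maxHeartbeats 1000000 in
/-- Lemma 2.1(iii): there is a subsequence of values `(y_j)` chosen from the `x_n` with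
`g (y_j) → 1` and `x` in the closed convex hull of every tail `{y_j : j ≥ l}`. -/
theorem stmt1 {X : Type*} [NormedAddCommGroup X] [NormedSpace ℝ X] [CompleteSpace X]
    (x : X) (hx : ‖x‖ = 1) (g : X →L[ℝ] ℝ) (hg : ‖g‖ = 1) (hgx : g x = 1)
    (xs : ℕ → X) (hxs : ∀ n, ‖xs n‖ ≤ 1)
    (hmem : x ∈ closure (convexHull ℝ (Set.range xs))) :
    ∃ y : ℕ → X, (∀ j, ∃ n, y j = xs n) ∧
      Tendsto (fun j => g (y j)) atTop (𝓝 1) ∧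
      ∀ l : ℕ, x ∈ closure (convexHull ℝ {v | ∃ j, l ≤ j ∧ v = y j}) := by
  have slice_lemma : ∀ {ε : ℝ}, 0 < ε →
      x ∈ closure (convexHull ℝ {v | (∃ n, v = xs n) ∧ 1 - ε < g v}) :=
    fun {ε} hε => slice_lemma x g hg hgx xs hxs hmem hε
  have finpick : ∀ (S : Set X), x ∈ closure (convexHull ℝ S) → ∀ {δ : ℝ}, 0 < δ →
      ∃ (m : ℕ) (q : ℕ → X), 0 < m ∧ (∀ i, q i ∈ S) ∧ (∀ i, q (i % m) = q i) ∧
        ∃ z ∈ convexHull ℝ (Set.range q), dist x z < δ :=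
    fun S hS {δ} hδ => finpick x S hS hδ
  classical
  have H : ∀ k : ℕ, ∃ (m : ℕ) (q : ℕ → X), 0 < m ∧
      (∀ i, (∃ n, q i = xs n) ∧ 1 - 1/((k:ℝ)+1) < g (q i)) ∧ (∀ i, q (i % m) = q i) ∧
      ∃ z ∈ convexHull ℝ (Set.range q), dist x z < 1/((k:ℝ)+1) := by
    intro k
    have hε : (0:ℝ) < 1/((k:ℝ)+1) := by positivity
    obtain ⟨m, q, hm, hqS, hper, z, hzc, hzd⟩ := finpick _ (slice_lemma hε) hε
    exact ⟨m, q, hm, fun i => hqS i, hper, z, hzc, hzd⟩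
  choose m q hm hq hper z hzc hzd using H
  set start : ℕ → ℕ := fun k => ∑ i ∈ Finset.range k, m i with hstart
  have hstart_succ : ∀ k, start (k+1) = start k + m k := fun k => Finset.sum_range_succ m k
  have hstart_mono : Monotone start := fun a b hab =>
    Finset.sum_le_sum_of_subset (Finset.range_subset_range.2 hab)
  have hstart_ge : ∀ k, k ≤ start k := by
    intro k
    calc k = ∑ _i ∈ Finset.range k, 1 := by simp
      _ ≤ ∑ i ∈ Finset.range k, m i := Finset.sum_le_sum (fun i _ => hm i)
  have hex : ∀ j, ∃ k, j < start (k+1) :=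
    fun j => ⟨j, lt_of_lt_of_le (Nat.lt_succ_self j) (hstart_ge (j+1))⟩
  set K : ℕ → ℕ := fun j => Nat.find (hex j) with hK
  have hK1 : ∀ j, j < start (K j + 1) := fun j => Nat.find_spec (hex j)
  have hK3 : ∀ k j, start k ≤ j → k ≤ K j := by
    intro k j hkj
    by_contra h
    push_neg at h
    have h2 : start (K j + 1) ≤ start k := hstart_mono h
    have h3 := hK1 j
    omega
  have hK4 : ∀ k j, start k ≤ j → j < start (k+1) → K j = k := by
    intro k j h1 h2
    have hle : K j ≤ k := Nat.find_min' (hex j) h2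
    have hge := hK3 k j h1
    omega
  -- bounds on g of the chosen points
  have hgle1 : ∀ k i, g (q k i) ≤ 1 := by
    intro k i
    obtain ⟨n, hn⟩ := (hq k i).1
    have h1 := g.le_opNorm (q k i)
    rw [hg, one_mul, Real.norm_eq_abs] at h1
    have h2 := (abs_le.1 h1).2
    have h3 : ‖q k i‖ ≤ 1 := by rw [hn]; exact hxs n
    linarith
  refine ⟨fun j => q (K j) j, fun j => (hq (K j) j).1, ?_, ?_⟩
  · -- tendsto
    rw [Metric.tendsto_atTop]
    intro ε hε
    obtain ⟨k, hk⟩ := exists_nat_one_div_lt hε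
    refine ⟨start k, fun j hj => ?_⟩
    have hKk : k ≤ K j := hK3 k j hj
    have h1 : 1 - 1/((K j : ℝ)+1) < g (q (K j) j) := (hq (K j) j).2
    have h2 := hgle1 (K j) j
    have h3 : (1:ℝ)/((K j:ℝ)+1) ≤ 1/((k:ℝ)+1) := by
      apply one_div_le_one_div_of_le (by positivity)
      have : (k:ℝ) ≤ (K j : ℝ) := Nat.cast_le.2 hKk
      linarith
    rw [Real.dist_eq, abs_of_nonpos (by linarith)]
    linarith
  · -- tails
    intro l
    rw [Metric.mem_closure_iff]
    intro δ hδ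
    obtain ⟨k0, hk0⟩ := exists_nat_one_div_lt hδ
    set k := max k0 l with hkdef
    have hlk : l ≤ start k := le_trans (le_max_right _ _) (hstart_ge k)
    refine ⟨z k, ?_, ?_⟩
    · apply convexHull_mono _ (hzc k)
      rintro a ⟨i, rfl⟩
      set a0 := start k with ha0
      set r0 := a0 % m k with hr0
      have hr : r0 < m k := Nat.mod_lt _ (hm k)
      set j := a0 + ((i + (m k - r0)) % m k) with hjdef
      have hj1 : a0 ≤ j := Nat.le_add_right _ _
      have hj2 : j < start (k+1) := by
        rw [hstart_succ]
        exact Nat.add_lt_add_left (Nat.mod_lt _ (hm k)) _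
      have hKj : K j = k := hK4 k j hj1 hj2
      have hmod : j % m k = i % m k := by
        obtain ⟨d, hd⟩ : ∃ d, m k * d + r0 = a0 := ⟨a0 / m k, Nat.div_add_mod a0 (m k)⟩
        have e1 : j % m k = (a0 + (i + (m k - r0))) % m k := Nat.add_mod_mod _ _ _
        have e2 : a0 + (i + (m k - r0)) = i + (d + 1) * (m k) := by
          calc a0 + (i + (m k - r0)) = m k * d + (r0 + (m k - r0)) + i := by
                rw [← hd]; ring
            _ = m k * d + m k + i := by rw [Nat.add_sub_cancel' (le_of_lt hr)]
            _ = i + (d + 1) * (m k) := by ring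
        rw [e1, e2, Nat.add_mul_mod_self_right]
      refine ⟨j, le_trans hlk hj1, ?_⟩
      show q k i = q (K j) j
      rw [hKj, ← hper k j, hmod, hper k i]
    · have h1 : dist x (z k) < 1/((k:ℝ)+1) := hzd k
      have h2 : (1:ℝ)/((k:ℝ)+1) ≤ 1/((k0:ℝ)+1) := by
        apply one_div_le_one_div_of_le (by positivity)
        have : (k0:ℝ) ≤ (k:ℝ) := Nat.cast_le.2 (le_max_left _ _)
        linarith
      linarith [hk0]
end

section
/- Let X be a real Banach space, x a smooth point of the unit sphere (i.e. there is a unique norm-one functional f with f(x)=1). Then the sets {g ∈ B_{X*} : g(x) > 1 - 1/n}, n ∈ ℕ, form a neighbourhood basis of f in the closed dual unit ball B_{X*} equipped with the weak-star topology: for every weak-star open set U ⊆ B_{X*} containing f, there is n ∈ ℕ with {g ∈ B_{X*} : g(x) > 1 - 1/n} ⊆ U. -/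
open NormedSpace

/-- At a smooth point `x` of the unit sphere, the slices `{g ∈ B_{X*} : g x > 1 - 1/n}` form a
weak-star neighbourhood basis of the (unique) support functional `f` relative to the dual ball. -/
theorem stmt4 {X : Type*} [NormedAddCommGroup X] [NormedSpace ℝ X] [CompleteSpace X]
    (x : X) (hx : ‖x‖ = 1)
    (f : StrongDual ℝ X)
    (hsmooth : ∃! h : StrongDual ℝ X, ‖h‖ = 1 ∧ h x = 1)
    (hf : ‖f‖ = 1) (hfx : f x = 1) :
    ∀ V : Set (WeakDual ℝ X), IsOpen V → StrongDual.toWeakDual f ∈ V →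
      ∃ n : ℕ, 0 < n ∧
        ∀ g : StrongDual ℝ X, ‖g‖ ≤ 1 → g x > 1 - 1 / (n : ℝ) →
          StrongDual.toWeakDual g ∈ V := by
  intro V hV hfV
  by_contra hcon
  push_neg at hcon
  -- the nested compact sets
  set K : ℕ → Set (WeakDual ℝ X) := fun n =>
    {φ : WeakDual ℝ X | ‖WeakDual.toStrongDual φ‖ ≤ 1 ∧ 1 - 1 / (n + 1 : ℝ) ≤ φ x} ∩ Vᶜ with hK
  have hKclosed : ∀ n, IsClosed (K n) := by
    intro n
    apply IsClosed.inter _ hV.isClosed_compl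
    apply IsClosed.inter
    · have h1 : IsClosed (⇑WeakDual.toStrongDual ⁻¹' Metric.closedBall (0 : StrongDual ℝ X) 1) :=
        WeakDual.isClosed_closedBall 0 1
      convert h1 using 2
      apply iff_of_eq
      congr 1
      ext φ
      simp only [Set.mem_preimage, Metric.mem_closedBall, dist_zero_right]
      rfl
    · exact isClosed_le continuous_const (WeakBilin.eval_continuous _ x)
  have hKcompact : ∀ n, IsCompact (K n) := by
    intro n
    apply WeakDual.isCompact_of_bounded_of_closed _ (hKclosed n)
    apply Bornology.IsBounded.subset (Metric.isBounded_closedBall (x := (0 : StrongDual ℝ X)) (r := 1))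
    intro g hg
    simp only [Set.mem_preimage, hK, Set.mem_inter_iff, Set.mem_setOf_eq] at hg
    simp only [Metric.mem_closedBall, dist_zero_right]
    exact hg.1.1
  have hKnonempty : ∀ n, (K n).Nonempty := by
    intro n
    obtain ⟨g, hg1, hg2, hg3⟩ := hcon (n + 1) (Nat.succ_pos n)
    refine ⟨StrongDual.toWeakDual g, ⟨⟨?_, ?_⟩, hg3⟩⟩
    · simpa using hg1
    · push_cast at hg2 ⊢
      exact le_of_lt hg2
  have hKanti : ∀ n, K (n + 1) ⊆ K n := by
    intro n φ hφ
    refine ⟨⟨hφ.1.1, le_trans ?_ hφ.1.2⟩, hφ.2⟩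
    have h1 : (0:ℝ) < n + 1 := by positivity
    have h2 : (n:ℝ) + 1 ≤ (n + 1 : ℕ) + 1 := by push_cast; linarith
    gcongr
  obtain ⟨φ, hφ⟩ := IsCompact.nonempty_iInter_of_sequence_nonempty_isCompact_isClosed
    K hKanti hKnonempty (hKcompact 0) hKclosed
  simp only [Set.mem_iInter] at hφ
  -- φ x ≥ 1
  have hφx : (1 : ℝ) ≤ φ x := by
    have hlim : Filter.Tendsto (fun n : ℕ => 1 - 1 / ((n : ℝ) + 1)) Filter.atTop (nhds 1) := by
      have h0 : Filter.Tendsto (fun n : ℕ => 1 / ((n : ℝ) + 1)) Filter.atTop (nhds 0) :=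
        tendsto_one_div_add_atTop_nhds_zero_nat
      simpa using (tendsto_const_nhds (x := (1:ℝ))).sub h0
    exact le_of_tendsto' hlim (fun n => (hφ n).1.2)
  set g : StrongDual ℝ X := WeakDual.toStrongDual φ with hg
  have hgnorm : ‖g‖ ≤ 1 := (hφ 0).1.1
  have hgx : g x ≤ 1 := by
    calc g x ≤ ‖g x‖ := le_abs_self _
    _ ≤ ‖g‖ * ‖x‖ := g.le_opNorm x
    _ ≤ 1 := by rw [hx]; simpa using hgnorm
  have hgx1 : g x = 1 := le_antisymm hgx hφx
  have hgnorm1 : ‖g‖ = 1 := by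
    apply le_antisymm hgnorm
    calc (1:ℝ) = g x := hgx1.symm
    _ ≤ ‖g x‖ := le_abs_self _
    _ ≤ ‖g‖ * ‖x‖ := g.le_opNorm x
    _ = ‖g‖ := by rw [hx, mul_one]
  have : g = f := by
    obtain ⟨h, _, huniq⟩ := hsmooth
    rw [huniq g ⟨hgnorm1, hgx1⟩, huniq f ⟨hf, hfx⟩]
  have : φ = StrongDual.toWeakDual f := by
    rw [← this, hg]; rfl
  exact (hφ 0).2 (this ▸ hfV)
end

section
/- (Šmulyan) Let X be a real Banach space and x ∈ S_X. Then the norm of X is Gâteaux differentiable at x if and only if for all sequences (f_n), (g_n) in S_{X*} with f_n(x) → 1 and g_n(x) → 1, one has f_n - g_n → 0 in the weak-star topology of X*. -/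
open Filter Topology

section helpers

variable {X : Type*} [NormedAddCommGroup X] [NormedSpace ℝ X]

/-- The difference quotient of the norm at `x` in direction `u`. -/
noncomputable def smulDq (x u : X) (t : ℝ) : ℝ := (‖x + t • u‖ - 1) / t

/-- The one-sided directional derivative (as an infimum) of the norm at `x`. -/
noncomputable def smulP (x u : X) : ℝ := sInf (smulDq x u '' Set.Ioi 0)

variable {x : X} (hx : ‖x‖ = 1)

include hx in
lemma smulDq_ge {u : X} {t : ℝ} (ht : 0 < t) : -‖u‖ ≤ smulDq x u t := by
  have h1 : ‖x‖ - ‖t • u‖ ≤ ‖x + t • u‖ := by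
    have : ‖x‖ ≤ ‖x + t • u‖ + ‖t • u‖ := by
      calc ‖x‖ = ‖(x + t • u) - t • u‖ := by rw [add_sub_cancel_right]
        _ ≤ ‖x + t • u‖ + ‖t • u‖ := norm_sub_le _ _
    linarith
  rw [hx, norm_smul, Real.norm_eq_abs, abs_of_pos ht] at h1
  rw [smulDq, le_div_iff₀ ht]
  nlinarith

include hx in
lemma smulP_bddBelow (u : X) : BddBelow (smulDq x u '' Set.Ioi 0) := by
  refine ⟨-‖u‖, ?_⟩
  rintro b ⟨t, ht, rfl⟩
  exact smulDq_ge hx ht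

lemma smulP_nonempty (u : X) : (smulDq x u '' Set.Ioi 0).Nonempty :=
  ⟨smulDq x u 1, 1, by norm_num, rfl⟩

include hx in
lemma smulP_le_dq (u : X) {t : ℝ} (ht : 0 < t) : smulP x u ≤ smulDq x u t :=
  csInf_le (smulP_bddBelow hx u) ⟨t, ht, rfl⟩

include hx in
lemma smulP_le_norm (u : X) : smulP x u ≤ ‖u‖ := by
  refine (smulP_le_dq hx u one_pos).trans ?_
  rw [smulDq]
  simp only [one_smul, div_one]
  have := norm_add_le x u
  linarith [hx ▸ this]

include hx in
lemma smulDq_mono {u : X} {s t : ℝ} (hs : 0 < s) (hst : s ≤ t) :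
    smulDq x u s ≤ smulDq x u t := by
  have ht : 0 < t := hs.trans_le hst
  have hst0 : 0 < s / t := div_pos hs ht
  have hst1 : s / t ≤ 1 := (div_le_one ht).2 hst
  have hdecomp : x + s • u = (1 - s / t) • x + (s / t) • (x + t • u) := by
    rw [smul_add, smul_smul, div_mul_cancel₀ _ ht.ne']
    module
  have key : ‖x + s • u‖ ≤ (1 - s / t) + (s / t) * ‖x + t • u‖ := by
    rw [hdecomp]
    refine (norm_add_le _ _).trans ?_
    rw [norm_smul, norm_smul, Real.norm_eq_abs, Real.norm_eq_abs,
      abs_of_nonneg (by linarith), abs_of_pos hst0, hx, mul_one]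
  have key2 : t * ‖x + s • u‖ ≤ (t - s) + s * ‖x + t • u‖ := by
    have h := mul_le_mul_of_nonneg_left key ht.le
    have heq : t * ((1 - s / t) + (s / t) * ‖x + t • u‖) = (t - s) + s * ‖x + t • u‖ := by
      field_simp
    rw [heq] at h
    exact h
  rw [smulDq, smulDq, div_le_div_iff₀ hs ht]
  linarith

include hx in
lemma smulP_smul (u : X) {c : ℝ} (hc : 0 < c) : smulP x (c • u) ≤ c * smulP x u := by
  rw [← div_le_iff₀' hc]
  refine le_csInf (smulP_nonempty u) ?_
  rintro b ⟨t, ht, rfl⟩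
  rw [div_le_iff₀' hc]
  have htc : (0:ℝ) < t / c := div_pos ht hc
  have heq : smulDq x (c • u) (t / c) = c * smulDq x u t := by
    rw [smulDq, smulDq, smul_smul, div_mul_cancel₀ _ hc.ne']
    field_simp
  calc smulP x (c • u) ≤ smulDq x (c • u) (t / c) := smulP_le_dq hx _ htc
    _ = c * smulDq x u t := heq

include hx in
lemma smulP_smul_eq (u : X) {c : ℝ} (hc : 0 < c) : smulP x (c • u) = c * smulP x u := by
  refine le_antisymm (smulP_smul hx u hc) ?_
  have := smulP_smul hx (c • u) (c := c⁻¹) (by positivity)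
  rw [smul_smul, inv_mul_cancel₀ hc.ne', one_smul] at this
  calc c * smulP x u ≤ c * (c⁻¹ * smulP x (c • u)) := by
        exact mul_le_mul_of_nonneg_left this hc.le
    _ = smulP x (c • u) := by field_simp

include hx in
lemma smulP_add (u w : X) : smulP x (u + w) ≤ smulP x u + smulP x w := by
  refine le_of_forall_pos_le_add fun ε hε => ?_
  obtain ⟨b1, ⟨t1, ht1, rfl⟩, hb1⟩ :=
    exists_lt_of_csInf_lt (smulP_nonempty u) (lt_add_of_pos_right (smulP x u) (half_pos hε))
  obtain ⟨b2, ⟨t2, ht2, rfl⟩, hb2⟩ :=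
    exists_lt_of_csInf_lt (smulP_nonempty w) (lt_add_of_pos_right (smulP x w) (half_pos hε))
  set m := min t1 t2 with hm
  have hm0 : 0 < m := lt_min ht1 ht2
  have hconv : smulDq x (u + w) (m / 2) ≤ smulDq x u m + smulDq x w m := by
    have hxu : x + (m / 2) • (u + w) = (1/2 : ℝ) • (x + m • u) + (1/2 : ℝ) • (x + m • w) := by
      module
    have hnorm : ‖x + (m / 2) • (u + w)‖ ≤ (‖x + m • u‖ + ‖x + m • w‖) / 2 := by
      rw [hxu]
      calc ‖(1/2 : ℝ) • (x + m • u) + (1/2 : ℝ) • (x + m • w)‖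
          ≤ ‖(1/2 : ℝ) • (x + m • u)‖ + ‖(1/2 : ℝ) • (x + m • w)‖ := norm_add_le _ _
        _ = (‖x + m • u‖ + ‖x + m • w‖) / 2 := by
            rw [norm_smul, norm_smul]; norm_num; ring
    rw [smulDq, smulDq, smulDq, ← add_div,
      div_le_div_iff₀ (by positivity : (0:ℝ) < m / 2) hm0]
    nlinarith [mul_le_mul_of_nonneg_right hnorm hm0.le]
  have h1 : smulDq x u m ≤ smulDq x u t1 := smulDq_mono hx hm0 (min_le_left _ _)
  have h2 : smulDq x w m ≤ smulDq x w t2 := smulDq_mono hx hm0 (min_le_right _ _)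
  calc smulP x (u + w) ≤ smulDq x (u + w) (m / 2) := smulP_le_dq hx _ (by positivity)
    _ ≤ smulDq x u m + smulDq x w m := hconv
    _ ≤ smulDq x u t1 + smulDq x w t2 := add_le_add h1 h2
    _ ≤ (smulP x u + ε / 2) + (smulP x w + ε / 2) := add_le_add hb1.le hb2.le
    _ = smulP x u + smulP x w + ε := by ring

include hx in
lemma smulP_zero : smulP x (0 : X) = 0 := by
  have h1 : smulP x 0 ≤ 0 := by
    have := smulP_le_dq hx (0 : X) one_pos
    simpa [smulDq, hx] using this
  have h2 : (0:ℝ) ≤ smulP x 0 := by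
    have := smulP_bddBelow hx (0 : X)
    refine le_csInf (smulP_nonempty 0) ?_
    rintro b ⟨t, ht, rfl⟩
    have := smulDq_ge hx (u := (0 : X)) ht
    simpa using this
  linarith

include hx in
lemma smulP_self : smulP x x = 1 := by
  have heq : ∀ t : ℝ, 0 < t → smulDq x x t = 1 := by
    intro t ht
    rw [smulDq]
    have : x + t • x = (1 + t) • x := by module
    rw [this, norm_smul, hx, Real.norm_eq_abs, abs_of_pos (by linarith)]
    field_simp
    ring
  have h1 : smulP x x ≤ 1 := by simpa [heq 1 one_pos] using smulP_le_dq hx x one_pos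
  have h2 : (1:ℝ) ≤ smulP x x := by
    refine le_csInf (smulP_nonempty x) ?_
    rintro b ⟨t, ht, rfl⟩
    rw [heq t ht]
  linarith

include hx in
lemma smulP_neg_self : smulP x (-x) = -1 := by
  have h1 : smulP x (-x) ≤ -1 := by
    have := smulP_le_dq hx (-x) one_pos
    simpa [smulDq, hx] using this
  have h2 : -‖(-x)‖ ≤ smulP x (-x) := by
    refine le_csInf (smulP_nonempty _) ?_
    rintro b ⟨t, ht, rfl⟩
    exact smulDq_ge hx ht
  rw [norm_neg, hx] at h2
  linarith

include hx in
/-- A norm-one support functional is dominated by `smulP`. -/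
lemma support_le_smulP (f : StrongDual ℝ X) (hf : ‖f‖ = 1) (hfx : f x = 1) (u : X) :
    f u ≤ smulP x u := by
  refine le_csInf (smulP_nonempty u) ?_
  rintro b ⟨t, ht, rfl⟩
  have hle : f (x + t • u) ≤ ‖x + t • u‖ := by
    calc f (x + t • u) ≤ |f (x + t • u)| := le_abs_self _
      _ ≤ ‖f‖ * ‖x + t • u‖ := f.le_opNorm _
      _ = ‖x + t • u‖ := by rw [hf, one_mul]
  rw [map_add, map_smul, hfx, smul_eq_mul] at hle
  rw [smulDq, le_div_iff₀ ht]
  linarith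

include hx in
/-- Existence of a support functional attaining `smulP x v` at `v`. -/
lemma exists_support_eq_smulP (v : X) (hv : v ≠ 0) :
    ∃ F : StrongDual ℝ X, ‖F‖ = 1 ∧ F x = 1 ∧ F v = smulP x v := by
  set pf := LinearPMap.mkSpanSingleton (K := ℝ) (L := ℝ) (σ := RingHom.id ℝ) v (smulP x v) hv with hpf
  have hdom : ∀ z : pf.domain, pf z ≤ smulP x (z : X) := by
    rintro ⟨z, hz⟩
    rw [LinearPMap.domain_mkSpanSingleton] at hz
    obtain ⟨c, rfl⟩ := Submodule.mem_span_singleton.1 hz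
    have happ : pf ⟨c • v, hz⟩ = c • smulP x v := LinearPMap.mkSpanSingleton'_apply _ _ _ c _
    rw [happ, smul_eq_mul]
    show c * smulP x v ≤ smulP x (c • v)
    rcases lt_trichotomy c 0 with hc | hc | hc
    · rw [show c • v = (-c) • (-v) by module, smulP_smul_eq hx _ (by linarith)]
      have hsum : (0:ℝ) ≤ smulP x v + smulP x (-v) := by
        have := smulP_add hx v (-v)
        rw [add_neg_cancel, smulP_zero hx] at this
        linarith
      nlinarith
    · subst hc
      simp only [zero_mul, zero_smul]
      rw [smulP_zero hx]
    · rw [smulP_smul_eq hx _ hc]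
  obtain ⟨g, hg_ext, hg_le⟩ := exists_extension_of_le_sublinear pf (smulP x)
    (fun c hc u => smulP_smul_eq hx u hc) (smulP_add hx) hdom
  have hg_bound : ∀ u, |g u| ≤ ‖u‖ := by
    intro u
    rw [abs_le]
    constructor
    · have := (hg_le (-u)).trans (smulP_le_norm hx (-u))
      rw [map_neg, norm_neg] at this
      linarith
    · exact (hg_le u).trans (smulP_le_norm hx u)
  set F : StrongDual ℝ X := LinearMap.mkContinuous g 1 (fun u => by
    rw [Real.norm_eq_abs, one_mul]; exact hg_bound u) with hF
  have hFapp : ∀ u, F u = g u := fun u => rfl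
  have hFx : F x = 1 := by
    have h1 := (hg_le x).trans_eq (smulP_self hx)
    have h2 := (hg_le (-x)).trans_eq (smulP_neg_self hx)
    rw [map_neg] at h2
    have h3 : F x = g x := hFapp x
    linarith
  have hFnorm : ‖F‖ = 1 := by
    have h1 : ‖F‖ ≤ 1 := LinearMap.mkContinuous_norm_le g zero_le_one _
    have h2 : (1:ℝ) ≤ ‖F‖ := by
      have := F.le_opNorm x
      rw [hx, mul_one, hFx] at this
      exact le_trans (le_abs_self 1) this
    linarith
  have hFv : F v = smulP x v := by
    have hvmem : v ∈ pf.domain := by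
      rw [LinearPMap.domain_mkSpanSingleton]
      exact Submodule.mem_span_singleton_self v
    have := hg_ext ⟨v, hvmem⟩
    rw [LinearPMap.mkSpanSingleton_apply] at this
    rw [hFapp, this]
  exact ⟨F, hFnorm, hFx, hFv⟩

include hx in
/-- Key: if the support functional is unique, then `smulP x v = f₀ v`. -/
lemma smulP_eq_of_unique (f₀ : StrongDual ℝ X)
    (hf₀ : ‖f₀‖ = 1 ∧ f₀ x = 1)
    (huniq : ∀ g : StrongDual ℝ X, (‖g‖ = 1 ∧ g x = 1) → g = f₀)
    (v : X) (hv : v ≠ 0) : smulP x v = f₀ v := by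
  obtain ⟨F, hFn, hFx, hFv⟩ := exists_support_eq_smulP hx v hv
  rw [← hFv, huniq F ⟨hFn, hFx⟩]

include hx in
/-- If the support functional is unique, any norming sequence converges weak-star to it. -/
lemma tendsto_of_unique (f₀ : StrongDual ℝ X)
    (hf₀ : ‖f₀‖ = 1 ∧ f₀ x = 1)
    (huniq : ∀ g : StrongDual ℝ X, (‖g‖ = 1 ∧ g x = 1) → g = f₀)
    (f : ℕ → StrongDual ℝ X) (hfn : ∀ n, ‖f n‖ = 1)
    (hfx : Tendsto (fun n => f n x) atTop (𝓝 1)) (v : X) :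
    Tendsto (fun n => f n v) atTop (𝓝 (f₀ v)) := by
  rcases eq_or_ne v 0 with rfl | hv
  · simpa using tendsto_const_nhds
  rw [Metric.tendsto_atTop]
  intro ε hε
  -- upper bound parameter
  obtain ⟨b1, ⟨t1, ht1, rfl⟩, hb1⟩ :=
    exists_lt_of_csInf_lt (smulP_nonempty v) (lt_add_of_pos_right (smulP x v) (half_pos hε))
  obtain ⟨b2, ⟨t2, ht2, rfl⟩, hb2⟩ :=
    exists_lt_of_csInf_lt (smulP_nonempty (-v)) (lt_add_of_pos_right (smulP x (-v)) (half_pos hε))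
  set δ := min t1 t2 * (ε / 2) with hδ
  have hδ0 : 0 < δ := mul_pos (lt_min ht1 ht2) (half_pos hε)
  have hev : ∀ᶠ n in atTop, 1 - δ < f n x := by
    have := hfx (Ioi_mem_nhds (show 1 - δ < 1 by linarith))
    simpa using this
  rw [eventually_atTop] at hev
  obtain ⟨N, hN⟩ := hev
  refine ⟨N, fun n hn => ?_⟩
  have hfnx := hN n hn
  have hbound : ∀ u : X, ∀ t : ℝ, 0 < t → f n u ≤ smulDq x u t + δ / t := by
    intro u t ht
    have hle : f n (x + t • u) ≤ ‖x + t • u‖ := by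
      calc f n (x + t • u) ≤ |f n (x + t • u)| := le_abs_self _
        _ ≤ ‖f n‖ * ‖x + t • u‖ := (f n).le_opNorm _
        _ = ‖x + t • u‖ := by rw [hfn n, one_mul]
    rw [map_add, map_smul, smul_eq_mul] at hle
    rw [smulDq, ← add_div, le_div_iff₀ ht]
    nlinarith
  have hP : smulP x v = f₀ v := smulP_eq_of_unique hx f₀ hf₀ huniq v hv
  have hPneg : smulP x (-v) = -f₀ v := by
    rw [smulP_eq_of_unique hx f₀ hf₀ huniq (-v) (neg_ne_zero.2 hv), map_neg]
  have hup : f n v < f₀ v + ε := by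
    have h1 := hbound v t1 ht1
    have hδt : δ / t1 ≤ ε / 2 := by
      rw [hδ, div_le_iff₀ ht1]
      have : min t1 t2 ≤ t1 := min_le_left _ _
      nlinarith
    rw [hP] at hb1
    linarith
  have hdown : f₀ v - ε < f n v := by
    have h1 := hbound (-v) t2 ht2
    have hδt : δ / t2 ≤ ε / 2 := by
      rw [hδ, div_le_iff₀ ht2]
      have : min t1 t2 ≤ t2 := min_le_right _ _
      nlinarith
    rw [hPneg] at hb2
    rw [map_neg] at h1
    linarith
  rw [Real.dist_eq, abs_lt]
  constructor <;> linarith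

end helpers

/-- Šmulyan's lemma: the norm is Gâteaux smooth at `x ∈ S_X` (equivalently, `x` has a unique
norm-one support functional) iff for all sequences `(f_n), (g_n) ⊆ S_{X*}` with
`f_n x → 1` and `g_n x → 1` one has `f_n - g_n → 0` in the weak-star topology. -/
theorem stmt5 {X : Type*} [NormedAddCommGroup X] [NormedSpace ℝ X] [CompleteSpace X]
    (x : X) (hx : ‖x‖ = 1) :
    (∃! f : StrongDual ℝ X, ‖f‖ = 1 ∧ f x = 1) ↔
      ∀ f g : ℕ → StrongDual ℝ X,
        (∀ n, ‖f n‖ = 1) → (∀ n, ‖g n‖ = 1) →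
        Tendsto (fun n => f n x) atTop (𝓝 1) →
        Tendsto (fun n => g n x) atTop (𝓝 1) →
        ∀ v : X, Tendsto (fun n => f n v - g n v) atTop (𝓝 0) := by
  constructor
  · rintro ⟨f₀, hf₀, huniq⟩ f g hfn hgn hfx hgx v
    have h1 := tendsto_of_unique hx f₀ hf₀ (fun g hg => huniq g hg) f hfn hfx v
    have h2 := tendsto_of_unique hx f₀ hf₀ (fun g hg => huniq g hg) g hgn hgx v
    simpa using h1.sub h2
  · intro H
    have hx0 : x ≠ 0 := by
      intro h
      rw [h, norm_zero] at hx
      norm_num at hx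
    obtain ⟨f₀, hf₀n, hf₀x⟩ := exists_dual_vector ℝ x (norm_ne_zero_iff.2 hx0)
    refine ⟨f₀, ⟨hf₀n, by rw [hf₀x, hx]; norm_num⟩, ?_⟩
    rintro g ⟨hgn, hgx⟩
    ext v
    have := H (fun _ => g) (fun _ => f₀) (fun _ => hgn) (fun _ => hf₀n)
      (tendsto_const_nhds.congr fun n => hgx.symm)
      (tendsto_const_nhds.congr fun n => by rw [hf₀x, hx]; norm_num) v
    have heq : (0:ℝ) = g v - f₀ v := tendsto_nhds_unique this tendsto_const_nhds
    simpa using sub_eq_zero.1 heq.symm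
end

section
/- In ℓ¹ (real sequences with summable absolute values), for each n the pair (e_n, e_n*) is a Flinn pair, where e_n is the n-th canonical unit vector and e_n* the n-th coordinate functional; that is, ‖I - e_n* ⊗ e_n‖ = 1. -/
noncomputable section

def coordCLM (n : ℕ) : lp (fun _ : ℕ => ℝ) 1 →L[ℝ] ℝ :=
  LinearMap.mkContinuous
    { toFun := fun x => x n
      map_add' := fun x y => by simp
      map_smul' := fun c x => by simp }
    1
    (fun x => by
      show ‖x n‖ ≤ 1 * ‖x‖
      simpa using lp.norm_apply_le_norm (by norm_num : (1 : ENNReal) ≠ 0) x n)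

/-- In `ℓ¹`, each pair `(e_n, e_n*)` is a Flinn pair: `‖I - e_n* ⊗ e_n‖ = 1`. -/
theorem stmt9 (n : ℕ) :
    ‖ContinuousLinearMap.id ℝ (lp (fun _ : ℕ => ℝ) 1) -
      (coordCLM n).smulRight (lp.single 1 n (1 : ℝ))‖ = 1 := by
  have hp : (0:ℝ) < (1 : ENNReal).toReal := by norm_num
  set T := ContinuousLinearMap.id ℝ (lp (fun _ : ℕ => ℝ) 1) -
      (coordCLM n).smulRight (lp.single 1 n (1 : ℝ)) with hT
  have hTapp : ∀ (x : lp (fun _ : ℕ => ℝ) 1) (k : ℕ),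
      (T x : ∀ _ : ℕ, ℝ) k = if k = n then 0 else x k := by
    intro x k
    have : (T x : ∀ _ : ℕ, ℝ) k = x k - x n * (lp.single 1 n (1:ℝ) : ∀ _ : ℕ, ℝ) k := by
      simp [hT, coordCLM, ContinuousLinearMap.smulRight_apply, LinearMap.coe_mk, AddHom.coe_mk]
      rfl
    rw [this, lp.single_apply]
    by_cases hk : k = n
    · subst hk; simp
    · simp [hk]
  apply le_antisymm
  · apply ContinuousLinearMap.opNorm_le_bound _ zero_le_one
    intro x
    rw [one_mul]
    apply lp.norm_le_of_tsum_le hp (lp.norm_nonneg' x)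
    have hxsum : Summable (fun k => ‖x k‖ ^ (1:ENNReal).toReal) :=
      (lp.memℓp x).summable hp
    have hle : ∀ k, ‖(T x : ∀ _ : ℕ, ℝ) k‖ ^ (1:ENNReal).toReal
        ≤ ‖x k‖ ^ (1:ENNReal).toReal := by
      intro k
      rw [hTapp x k]
      by_cases hk : k = n <;> simp [hk]
    calc ∑' k, ‖(T x : ∀ _ : ℕ, ℝ) k‖ ^ (1:ENNReal).toReal
        ≤ ∑' k, ‖x k‖ ^ (1:ENNReal).toReal := by
          apply Summable.tsum_le_tsum hle _ hxsum
          apply hxsum.of_nonneg_of_le (fun k => by positivity) hle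
      _ = ‖x‖ ^ (1:ENNReal).toReal := (lp.norm_rpow_eq_tsum hp x).symm
  · have hy : ‖lp.single (E := fun _ : ℕ => ℝ) 1 (n+1) (1:ℝ)‖ = 1 := by
      simpa using lp.norm_single (E := fun _ : ℕ => ℝ) hp (fun _ => (1:ℝ)) (n+1)
    have := T.le_opNorm (lp.single (E := fun _ : ℕ => ℝ) 1 (n+1) (1:ℝ))
    have hTy : T (lp.single (E := fun _ : ℕ => ℝ) 1 (n+1) (1:ℝ)) = lp.single (E := fun _ : ℕ => ℝ) 1 (n+1) (1:ℝ) := by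
      ext k
      rw [hTapp]
      by_cases hk : k = n
      · subst hk; rw [if_pos rfl, lp.single_apply_ne _ _ _ (by omega)]
      · rw [if_neg hk]
    rw [hTy, hy, mul_one] at this
    linarith

end
end

section
/- Let X be a real Banach space that is ω-LUR (every point of the unit sphere is a weak-LUR point) and suppose u ∈ S_X is a big point. Then for every x ∈ S_X there is a sequence (u_n) of images of u under surjective linear isometries of X such that u_n → x weakly. -/
open Filter Topology

/-- In an ω-LUR Banach space, if `u` is a big point then every point of the unit sphere is a
weak limit of a sequence of images of `u` under surjective linear isometries. -/
theorem stmt12 {X : Type*} [NormedAddCommGroup X] [NormedSpace ℝ X] [CompleteSpace X]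
    (hwLUR : ∀ x : X, ‖x‖ = 1 → ∀ xs : ℕ → X, (∀ n, ‖xs n‖ ≤ 1) →
      Tendsto (fun n => ‖x + xs n‖) atTop (𝓝 2) →
      ∀ f : StrongDual ℝ X, Tendsto (fun n => f (xs n)) atTop (𝓝 (f x)))
    (u : X) (hu : ‖u‖ = 1)
    (hbig : closure (convexHull ℝ {y : X | ∃ T : X ≃ₗᵢ[ℝ] X, y = T u}) =
      Metric.closedBall (0 : X) 1) :
    ∀ x : X, ‖x‖ = 1 →
      ∃ us : ℕ → X, (∀ n, ∃ T : X ≃ₗᵢ[ℝ] X, us n = T u) ∧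
        ∀ f : StrongDual ℝ X, Tendsto (fun n => f (us n)) atTop (𝓝 (f x)) := by
  intro x hx
  have hxmem : x ∈ closure (convexHull ℝ {y : X | ∃ T : X ≃ₗᵢ[ℝ] X, y = T u}) := by
    rw [hbig]; simp [Metric.mem_closedBall, dist_eq_norm, hx]
  have key : ∀ n : ℕ, ∃ z : X, (∃ T : X ≃ₗᵢ[ℝ] X, z = T u) ∧
      2 - 1 / (n + 1) ≤ ‖x + z‖ := by
    intro n
    obtain ⟨y, hy, hyd⟩ := Metric.mem_closure_iff.mp hxmem (1 / (n + 1)) (by positivity)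
    have hconv : ConvexOn ℝ Set.univ (fun z : X => dist z (-x)) :=
      convexOn_dist (-x) convex_univ
    obtain ⟨z, hz, hzle⟩ :=
      hconv.exists_ge_of_mem_convexHull (Set.subset_univ _) hy
    refine ⟨z, hz, ?_⟩
    have h1 : ‖x + y‖ ≤ ‖x + z‖ := by
      simp only [dist_eq_norm, sub_neg_eq_add] at hzle
      simpa [add_comm] using hzle
    have h2 : 2 - 1 / (n + 1) ≤ ‖x + y‖ := by
      have : ‖x + x‖ - ‖x - y‖ ≤ ‖x + y‖ := by
        have := norm_sub_norm_le (x + x) (x - y)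
        have heq : x + x - (x - y) = x + y := by abel
        rw [heq] at this
        linarith [abs_le.mp (abs_norm_sub_norm_le (x + x) (x - y))]
      have hxx : ‖x + x‖ = 2 := by
        rw [← two_smul ℝ x, norm_smul]; simp [hx]
      have hxy : ‖x - y‖ < 1 / (n + 1) := by
        rw [dist_eq_norm] at hyd; exact hyd
      linarith
    calc 2 - 1 / (n + 1) ≤ ‖x + y‖ := h2
      _ ≤ ‖x + z‖ := h1
  choose z hzT hzge using key
  have hznorm : ∀ n, ‖z n‖ ≤ 1 := by
    intro n; obtain ⟨T, hT⟩ := hzT n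
    rw [hT, T.norm_map, hu]
  have hzle2 : ∀ n, ‖x + z n‖ ≤ 2 := fun n => by
    calc ‖x + z n‖ ≤ ‖x‖ + ‖z n‖ := norm_add_le _ _
      _ ≤ 2 := by rw [hx]; linarith [hznorm n]
  have htend : Tendsto (fun n => ‖x + z n‖) atTop (𝓝 2) := by
    have hlow : Tendsto (fun n : ℕ => 2 - 1 / ((n : ℝ) + 1)) atTop (𝓝 2) := by
      have := tendsto_one_div_add_atTop_nhds_zero_nat (𝕜 := ℝ)
      simpa using (tendsto_const_nhds (x := (2 : ℝ))).sub this
    exact tendsto_of_tendsto_of_tendsto_of_le_of_le hlow tendsto_const_nhds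
      (fun n => hzge n) (fun n => hzle2 n)
  exact ⟨z, hzT, hwLUR x hx z hznorm htend⟩
end

section
/- Let X be an ω-LUR real Banach space admitting a big point u ∈ S_X. Then X is convex-transitive: for all x, y ∈ S_X, y lies in the closed convex hull of the isometry orbit of x. -/
open Filter Topology

/-- An ω-LUR Banach space admitting a big point is convex-transitive. -/
theorem stmt13 {X : Type*} [NormedAddCommGroup X] [NormedSpace ℝ X] [CompleteSpace X]
    (hwLUR : ∀ x : X, ‖x‖ = 1 → ∀ xs : ℕ → X, (∀ n, ‖xs n‖ ≤ 1) →
      Tendsto (fun n => ‖x + xs n‖) atTop (𝓝 2) →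
      ∀ f : StrongDual ℝ X, Tendsto (fun n => f (xs n)) atTop (𝓝 (f x)))
    (u : X) (hu : ‖u‖ = 1)
    (hbig : closure (convexHull ℝ {y : X | ∃ T : X ≃ₗᵢ[ℝ] X, y = T u}) =
      Metric.closedBall (0 : X) 1) :
    ∀ x y : X, ‖x‖ = 1 → ‖y‖ = 1 →
      y ∈ closure (convexHull ℝ {z : X | ∃ T : X ≃ₗᵢ[ℝ] X, z = T x}) := by
  intro x y hx hy
  set Ou : Set X := {y : X | ∃ T : X ≃ₗᵢ[ℝ] X, y = T u} with hOu
  set Ox : Set X := {z : X | ∃ T : X ≃ₗᵢ[ℝ] X, z = T x} with hOx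
  set S : Set X := closure (convexHull ℝ Ox) with hS
  -- Step 1: for each n, find an isometry T with ‖x + T u‖ ≥ 2 - 1/(n+1)
  have key : ∀ n : ℕ, ∃ T : X ≃ₗᵢ[ℝ] X, 2 - 1 / (n + 1 : ℝ) ≤ ‖x + T u‖ := by
    intro n
    have hxball : x ∈ closure (convexHull ℝ Ou) := by
      rw [hbig]
      simp [hx]
    have hpos : (0 : ℝ) < 1 / (n + 1 : ℝ) := by positivity
    obtain ⟨c, hc, hdist⟩ := Metric.mem_closure_iff.mp hxball _ hpos
    obtain ⟨z, hz, hge⟩ := convexHull_exists_dist_ge hc (-x)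
    obtain ⟨T, hT⟩ := hz
    refine ⟨T, ?_⟩
    have h2 : ‖x + x‖ = 2 := by
      rw [show x + x = (2 : ℝ) • x by module, norm_smul, hx]
      norm_num
    have htri : ‖x + x‖ ≤ ‖x + c‖ + ‖x - c‖ := by
      calc ‖x + x‖ = ‖(x + c) + (x - c)‖ := by rw [show x + x = (x + c) + (x - c) by abel]
        _ ≤ ‖x + c‖ + ‖x - c‖ := norm_add_le _ _
    have hdx : ‖x - c‖ < 1 / (n + 1 : ℝ) := by rwa [← dist_eq_norm]
    have hcz : ‖x + c‖ ≤ ‖x + z‖ := by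
      have := hge
      rw [dist_eq_norm, dist_eq_norm] at this
      simpa [sub_neg_eq_add, add_comm] using this
    have : 2 - 1 / (n + 1 : ℝ) ≤ ‖x + c‖ := by
      rw [← h2] at *
      linarith
    rw [← hT]
    linarith
  choose T hT using key
  -- Step 2: ‖x + T n u‖ → 2
  have hnormle : ∀ n : ℕ, ‖x + T n u‖ ≤ 2 := fun n => by
    calc ‖x + T n u‖ ≤ ‖x‖ + ‖T n u‖ := norm_add_le _ _
      _ = 2 := by rw [hx, (T n).norm_map, hu]; norm_num
  have htend : Tendsto (fun n => ‖x + T n u‖) atTop (𝓝 2) := by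
    have hlow : Tendsto (fun n : ℕ => 2 - 1 / (n + 1 : ℝ)) atTop (𝓝 2) := by
      have : Tendsto (fun n : ℕ => 1 / (n + 1 : ℝ)) atTop (𝓝 0) :=
        tendsto_one_div_add_atTop_nhds_zero_nat
      simpa using (tendsto_const_nhds (x := (2:ℝ))).sub this
    exact tendsto_of_tendsto_of_tendsto_of_le_of_le hlow tendsto_const_nhds
      (fun n => hT n) (fun n => hnormle n)
  -- Step 3: apply ω-LUR to u and the sequence (T n).symm x
  have hseq : Tendsto (fun n => ‖u + (T n).symm x‖) atTop (𝓝 2) := by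
    have : ∀ n, ‖u + (T n).symm x‖ = ‖x + T n u‖ := by
      intro n
      rw [← (T n).norm_map (u + (T n).symm x)]
      simp [map_add, add_comm]
    simpa [this] using htend
  have hbd : ∀ n, ‖(T n).symm x‖ ≤ 1 := fun n => by
    rw [(T n).symm.norm_map, hx]
  have hweak := hwLUR u hu (fun n => (T n).symm x) hbd hseq
  -- Step 4: u ∈ S by Hahn-Banach separation
  have hSconvex : Convex ℝ S := (convex_convexHull ℝ Ox).closure
  have hSclosed : IsClosed S := isClosed_closure
  have hmemOx : ∀ n, (T n).symm x ∈ Ox := fun n => ⟨(T n).symm, rfl⟩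
  have huS : u ∈ S := by
    by_contra hus
    obtain ⟨f, c, hfc, hcf⟩ := geometric_hahn_banach_closed_point hSconvex hSclosed hus
    have hle : ∀ n, f ((T n).symm x) ≤ c := fun n =>
      (hfc _ (subset_closure (subset_convexHull ℝ Ox (hmemOx n)))).le
    have : f u ≤ c := le_of_tendsto (hweak f) (Eventually.of_forall hle)
    linarith
  -- Step 5: S is invariant under isometries, hence contains Ou, hence the ball
  have hOuS : Ou ⊆ S := by
    rintro z ⟨R, rfl⟩
    have hmaps : Set.MapsTo R (convexHull ℝ Ox) (convexHull ℝ Ox) := by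
      intro w hw
      have himg : R '' convexHull ℝ Ox = convexHull ℝ (R '' Ox) :=
        R.toLinearEquiv.toLinearMap.image_convexHull Ox
      have hsub : R '' Ox ⊆ Ox := by
        rintro _ ⟨w', ⟨T', rfl⟩, rfl⟩
        exact ⟨T'.trans R, rfl⟩
      have : R w ∈ convexHull ℝ (R '' Ox) := by
        rw [← himg]; exact Set.mem_image_of_mem R hw
      exact convexHull_mono hsub this
    exact map_mem_closure R.continuous huS hmaps
  have hball : Metric.closedBall (0 : X) 1 ⊆ S := by
    rw [← hbig]
    exact closure_minimal (convexHull_min hOuS hSconvex) hSclosed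
  exact hball (by simp [hy])
end

section
/- Let X be a real Banach space, (x_n, f_n) ∈ S_X × S_{X*} pairs with f_n(x_n) = 1, and let (y, g) ∈ S_X × S_{X*} with g(y) = 1 where y is a smooth point. Suppose there are finitely supported convex coefficients (c_n^{(k)})_n, k ∈ ℕ, such that Σ_n c_n^{(k)} x_n → y weakly and Σ_n c_n^{(k)} f_n(y) → 1 as k → ∞. Then the operators P_k = Σ_n c_n^{(k)} f_n ⊗ x_n converge to g ⊗ y in the weak operator topology. -/
open Filter Topology NormedSpace


lemma smul_key {X : Type*} [NormedAddCommGroup X] [NormedSpace ℝ X]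
    (y : X) (g : StrongDual ℝ X) (hy : ‖y‖ = 1)
    (hsmooth : ∀ h : StrongDual ℝ X, ‖h‖ = 1 → h y = 1 → h = g)
    (h : ℕ → StrongDual ℝ X) (hnorm : ∀ k, ‖h k‖ ≤ 1)
    (hhy : Tendsto (fun k => h k y) atTop (𝓝 1)) (v : X) :
    Tendsto (fun k => h k v) atTop (𝓝 (g v)) := by
  apply tendsto_of_subseq_tendsto
  intro ns hns
  set u : ℕ → WeakDual ℝ X := fun j => StrongDual.toWeakDual (h (ns j)) with hu
  have hball : ∀ j, u j ∈ (WeakDual.toStrongDual ⁻¹' Metric.closedBall (0 : StrongDual ℝ X) 1) := by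
    intro j
    simp only [Set.mem_preimage, Metric.mem_closedBall, dist_zero_right]
    exact hnorm (ns j)
  have hcomp := WeakDual.isCompact_closedBall (𝕜 := ℝ) (E := X) 0 1
  have hle : Filter.map u atTop ≤ Filter.principal
      (WeakDual.toStrongDual ⁻¹' Metric.closedBall (0 : StrongDual ℝ X) 1) := by
    rw [Filter.le_principal_iff, Filter.mem_map]
    exact Filter.Eventually.of_forall hball
  obtain ⟨H, hHmem, hHcl⟩ := hcomp.exists_clusterPt hle
  have hHcl' : MapClusterPt H atTop u := hHcl
  -- evaluate at y : cluster point of (h (ns j)) y, which tends to 1, so H y = 1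
  have hevaly : MapClusterPt (H y) atTop (fun j => h (ns j) y) :=
    hHcl'.continuousAt_comp (WeakDual.eval_continuous (𝕜 := ℝ) (E := X) y).continuousAt
  have hty : Tendsto (fun j => h (ns j) y) atTop (𝓝 1) := hhy.comp hns
  have hHy : H y = 1 := by
    have := hevaly.clusterPt
    have hle2 : Filter.map (fun j => h (ns j) y) atTop ≤ 𝓝 1 := hty
    have : (𝓝 (H y) ⊓ 𝓝 (1:ℝ)).NeBot := this.mono hle2
    exact eq_of_nhds_neBot this
  have hHnorm : ‖WeakDual.toStrongDual H‖ = 1 := by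
    have h1 : ‖WeakDual.toStrongDual H‖ ≤ 1 := by
      simpa [dist_zero_right] using hHmem
    have h2 : (1:ℝ) ≤ ‖WeakDual.toStrongDual H‖ := by
      have := (WeakDual.toStrongDual H).le_opNorm y
      rw [hy, mul_one] at this
      calc (1:ℝ) = (WeakDual.toStrongDual H) y := by rw [WeakDual.toStrongDual_apply, hHy]
        _ ≤ |(WeakDual.toStrongDual H) y| := le_abs_self _
        _ ≤ ‖(WeakDual.toStrongDual H)‖ := by rwa [Real.norm_eq_abs] at this
    linarith
  have hHg : WeakDual.toStrongDual H = g := hsmooth _ hHnorm hHy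
  -- evaluate at v
  have hevalv : MapClusterPt (H v) atTop (fun j => h (ns j) v) :=
    hHcl'.continuousAt_comp (WeakDual.eval_continuous (𝕜 := ℝ) (E := X) v).continuousAt
  have hHv : H v = g v := by rw [← hHg]; rfl
  rw [hHv] at hevalv
  obtain ⟨θ, hθmono, hθ⟩ := subseq_tendsto_of_neBot hevalv.clusterPt
  exact ⟨θ, hθ⟩

/-- Lemma 2.4 (first part): if `Σ_n c_n^{(k)} x_n → y` weakly and `Σ_n c_n^{(k)} f_n(y) → 1`,
with `y` a smooth point supported by `g`, then `P_k = Σ_n c_n^{(k)} f_n ⊗ x_n → g ⊗ y` in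
the weak operator topology. -/
theorem stmt14 {X : Type*} [NormedAddCommGroup X] [NormedSpace ℝ X] [CompleteSpace X]
    (xs : ℕ → X) (fs : ℕ → StrongDual ℝ X)
    (hxs : ∀ n, ‖xs n‖ = 1) (hfs : ∀ n, ‖fs n‖ = 1) (hpair : ∀ n, fs n (xs n) = 1)
    (y : X) (g : StrongDual ℝ X) (hy : ‖y‖ = 1) (hg : ‖g‖ = 1) (hgy : g y = 1)
    (hsmooth : ∀ h : StrongDual ℝ X, ‖h‖ = 1 → h y = 1 → h = g)
    (c : ℕ → ℕ → ℝ) (hc0 : ∀ k n, 0 ≤ c k n)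
    (hcfin : ∀ k, (Function.support (c k)).Finite) (hcsum : ∀ k, ∑ᶠ n, c k n = 1)
    (hweak : ∀ φ : StrongDual ℝ X,
      Tendsto (fun k => φ (∑ᶠ n, c k n • xs n)) atTop (𝓝 (φ y)))
    (hfy : Tendsto (fun k => ∑ᶠ n, c k n * fs n y) atTop (𝓝 1)) :
    ∀ v : X, ∀ φ : StrongDual ℝ X,
      Tendsto (fun k => φ (∑ᶠ n, c k n • (fs n v • xs n))) atTop (𝓝 (φ (g v • y))) := by
  intro v φ
  set s : ℕ → Finset ℕ := fun k => (hcfin k).toFinset with hs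
  have hmem : ∀ k n, c k n ≠ 0 → n ∈ s k := fun k n hn => (hcfin k).mem_toFinset.2 hn
  -- rewrite finsums as finset sums
  have hrwX : ∀ (k : ℕ) (F : ℕ → X), (∑ᶠ n, c k n • F n) = ∑ n ∈ s k, c k n • F n := by
    intro k F
    apply finsum_eq_sum_of_support_subset
    intro n hn
    simp only [Function.mem_support] at hn
    exact hmem k n (fun h => hn (by simp [h]))
  have hrwR : ∀ (k : ℕ) (F : ℕ → ℝ), (∑ᶠ n, c k n * F n) = ∑ n ∈ s k, c k n * F n := by
    intro k F
    apply finsum_eq_sum_of_support_subset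
    intro n hn
    simp only [Function.mem_support] at hn
    exact hmem k n (fun h => hn (by simp [h]))
  have csum : ∀ k, ∑ n ∈ s k, c k n = 1 := by
    intro k
    rw [← hcsum k]
    symm
    apply finsum_eq_sum_of_support_subset
    intro n hn
    exact hmem k n hn
  -- basic bounds
  have hfny : ∀ n, fs n y ≤ 1 := by
    intro n
    calc fs n y ≤ ‖fs n y‖ := le_abs_self _
      _ ≤ ‖fs n‖ * ‖y‖ := (fs n).le_opNorm y
      _ = 1 := by rw [hfs n, hy, mul_one]
  have hphix : ∀ n, |φ (xs n)| ≤ ‖φ‖ := by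
    intro n
    calc |φ (xs n)| = ‖φ (xs n)‖ := rfl
      _ ≤ ‖φ‖ * ‖xs n‖ := φ.le_opNorm (xs n)
      _ = ‖φ‖ := by rw [hxs n, mul_one]
  -- first application: h k = Σ c f_n
  set h : ℕ → StrongDual ℝ X := fun k => ∑ n ∈ s k, c k n • fs n with hh
  have happ : ∀ (k : ℕ) (z : X), h k z = ∑ n ∈ s k, c k n * fs n z := by
    intro k z
    simp [hh, ContinuousLinearMap.sum_apply, ContinuousLinearMap.smul_apply, smul_eq_mul]
  have hnorm : ∀ k, ‖h k‖ ≤ 1 := by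
    intro k
    calc ‖h k‖ ≤ ∑ n ∈ s k, ‖c k n • fs n‖ := norm_sum_le _ _
      _ = ∑ n ∈ s k, c k n := by
          apply Finset.sum_congr rfl
          intro n _
          rw [norm_smul, hfs n, mul_one, Real.norm_eq_abs, abs_of_nonneg (hc0 k n)]
      _ = 1 := csum k
  have hhy : Tendsto (fun k => h k y) atTop (𝓝 1) := by
    have : (fun k => h k y) = fun k => ∑ᶠ n, c k n * fs n y := by
      funext k; rw [happ, hrwR]
    rw [this]; exact hfy
  have hgv : Tendsto (fun k => h k v) atTop (𝓝 (g v)) :=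
    smul_key y g hy hsmooth h hnorm hhy v
  -- φ applied to Σ c x_n
  set P : ℕ → ℝ := fun k => ∑ n ∈ s k, c k n * φ (xs n) with hP
  have hPlim : Tendsto P atTop (𝓝 (φ y)) := by
    have := hweak φ
    have heq : (fun k => φ (∑ᶠ n, c k n • xs n)) = P := by
      funext k
      rw [hrwX k xs, map_sum]
      apply Finset.sum_congr rfl
      intro n _
      rw [map_smul, smul_eq_mul]
    rwa [heq] at this
  have hPbound : ∀ k, |P k| ≤ ‖φ‖ := by
    intro k
    calc |P k| ≤ ∑ n ∈ s k, |c k n * φ (xs n)| := Finset.abs_sum_le_sum_abs _ _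
      _ ≤ ∑ n ∈ s k, c k n * ‖φ‖ := by
          apply Finset.sum_le_sum
          intro n _
          rw [abs_mul, abs_of_nonneg (hc0 k n)]
          exact mul_le_mul_of_nonneg_left (hphix n) (hc0 k n)
      _ = ‖φ‖ := by rw [← Finset.sum_mul, csum k, one_mul]
  -- T k = Σ c φ(x_n) f_n(y) → φ y
  set T : ℕ → ℝ := fun k => ∑ n ∈ s k, c k n * (φ (xs n) * fs n y) with hT
  have hTlim : Tendsto T atTop (𝓝 (φ y)) := by
    have hdiff : Tendsto (fun k => T k - P k) atTop (𝓝 0) := by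
      have hlim0 : Tendsto (fun k => ‖φ‖ * (1 - h k y)) atTop (𝓝 0) := by
        have : Tendsto (fun k => ‖φ‖ * (1 - h k y)) atTop (𝓝 (‖φ‖ * (1 - 1))) :=
          (tendsto_const_nhds.sub hhy).const_mul ‖φ‖
        simpa using this
      apply squeeze_zero_norm _ hlim0
      · intro k
        have : T k - P k = ∑ n ∈ s k, c k n * (φ (xs n) * (fs n y - 1)) := by
          rw [hT, hP, ← Finset.sum_sub_distrib]
          apply Finset.sum_congr rfl
          intro n _
          ring
        rw [this, Real.norm_eq_abs]
        calc |∑ n ∈ s k, c k n * (φ (xs n) * (fs n y - 1))|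
            ≤ ∑ n ∈ s k, |c k n * (φ (xs n) * (fs n y - 1))| := Finset.abs_sum_le_sum_abs _ _
          _ ≤ ∑ n ∈ s k, c k n * (‖φ‖ * (1 - fs n y)) := by
              apply Finset.sum_le_sum
              intro n _
              rw [abs_mul, abs_of_nonneg (hc0 k n), abs_mul, abs_sub_comm,
                abs_of_nonneg (by linarith [hfny n] : (0:ℝ) ≤ 1 - fs n y)]
              exact mul_le_mul_of_nonneg_left
                (mul_le_mul_of_nonneg_right (hphix n) (by linarith [hfny n])) (hc0 k n)
          _ = ‖φ‖ * ∑ n ∈ s k, (c k n - c k n * fs n y) := by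
              rw [Finset.mul_sum]
              apply Finset.sum_congr rfl
              intro n _
              ring
          _ = ‖φ‖ * (1 - h k y) := by
              rw [Finset.sum_sub_distrib, csum k, happ k y]
    have := hdiff.add hPlim
    simpa using this
  -- second application with weights c (M + φ x)
  set M : ℝ := ‖φ‖ + 1 with hM
  set W : ℕ → ℝ := fun k => M + P k with hW
  have hW1 : ∀ k, 1 ≤ W k := by
    intro k
    have := hPbound k
    have := abs_le.1 this
    simp only [hW, hM]
    linarith [this.1]
  have hWpos : ∀ k, 0 < W k := fun k => lt_of_lt_of_le one_pos (hW1 k)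
  have hWlim : Tendsto W atTop (𝓝 (M + φ y)) := tendsto_const_nhds.add hPlim
  have hWylim : (1:ℝ) ≤ M + φ y := le_of_tendsto_of_tendsto tendsto_const_nhds hWlim
    (Filter.Eventually.of_forall hW1)
  have hWyne : M + φ y ≠ 0 := by linarith
  set H : ℕ → StrongDual ℝ X := fun k => (W k)⁻¹ • ∑ n ∈ s k, (c k n * (M + φ (xs n))) • fs n with hH
  have hwnn : ∀ k n, 0 ≤ c k n * (M + φ (xs n)) := by
    intro k n
    apply mul_nonneg (hc0 k n)
    have := abs_le.1 (hphix n)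
    simp only [hM]
    linarith [this.1]
  have hwsum : ∀ k, ∑ n ∈ s k, c k n * (M + φ (xs n)) = W k := by
    intro k
    calc ∑ n ∈ s k, c k n * (M + φ (xs n))
        = ∑ n ∈ s k, (c k n * M + c k n * φ (xs n)) := by
          apply Finset.sum_congr rfl; intro n _; ring
      _ = (∑ n ∈ s k, c k n) * M + P k := by
          rw [Finset.sum_add_distrib, Finset.sum_mul]
      _ = W k := by rw [csum k, one_mul]
  have hHnorm : ∀ k, ‖H k‖ ≤ 1 := by
    intro k
    rw [hH]
    simp only
    rw [norm_smul, Real.norm_eq_abs, abs_of_nonneg (inv_nonneg.2 (hWpos k).le)]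
    have : ‖∑ n ∈ s k, (c k n * (M + φ (xs n))) • fs n‖ ≤ W k := by
      calc ‖∑ n ∈ s k, (c k n * (M + φ (xs n))) • fs n‖
          ≤ ∑ n ∈ s k, ‖(c k n * (M + φ (xs n))) • fs n‖ := norm_sum_le _ _
        _ = ∑ n ∈ s k, c k n * (M + φ (xs n)) := by
            apply Finset.sum_congr rfl
            intro n _
            rw [norm_smul, hfs n, mul_one, Real.norm_eq_abs, abs_of_nonneg (hwnn k n)]
        _ = W k := hwsum k
    calc (W k)⁻¹ * ‖∑ n ∈ s k, (c k n * (M + φ (xs n))) • fs n‖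
        ≤ (W k)⁻¹ * W k := mul_le_mul_of_nonneg_left this (inv_nonneg.2 (hWpos k).le)
      _ = 1 := inv_mul_cancel₀ (hWpos k).ne'
  have hHapp : ∀ (k : ℕ) (z : X), H k z = (W k)⁻¹ * ∑ n ∈ s k, c k n * (M + φ (xs n)) * fs n z := by
    intro k z
    simp [hH, ContinuousLinearMap.sum_apply, ContinuousLinearMap.smul_apply, smul_eq_mul]
  have hsplit : ∀ (k : ℕ) (z : X),
      ∑ n ∈ s k, c k n * (M + φ (xs n)) * fs n z = M * h k z + ∑ n ∈ s k, c k n * (φ (xs n) * fs n z) := by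
    intro k z
    rw [happ k z, Finset.mul_sum, ← Finset.sum_add_distrib]
    apply Finset.sum_congr rfl
    intro n _
    ring
  have hHy : Tendsto (fun k => H k y) atTop (𝓝 1) := by
    have heq : ∀ k, H k y = (W k)⁻¹ * (M * h k y + T k) := by
      intro k
      rw [hHapp, hsplit]
    have hlim : Tendsto (fun k => (W k)⁻¹ * (M * h k y + T k)) atTop
        (𝓝 ((M + φ y)⁻¹ * (M * 1 + φ y))) :=
      (hWlim.inv₀ hWyne).mul ((hhy.const_mul M).add hTlim)
    have : (M + φ y)⁻¹ * (M * 1 + φ y) = 1 := by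
      rw [mul_one]
      exact inv_mul_cancel₀ hWyne
    rw [this] at hlim
    simpa only [heq] using hlim
  have hHv : Tendsto (fun k => H k v) atTop (𝓝 (g v)) :=
    smul_key y g hy hsmooth H hHnorm hHy v
  -- extract Σ c φ(x_n) f_n(v) → φ y * g v
  set Q : ℕ → ℝ := fun k => ∑ n ∈ s k, c k n * (φ (xs n) * fs n v) with hQ
  have hQeq : ∀ k, Q k = W k * H k v - M * h k v := by
    intro k
    rw [hHapp, hsplit, ← mul_assoc, mul_inv_cancel₀ (hWpos k).ne', one_mul]
    ring
  have hQlim : Tendsto Q atTop (𝓝 (φ y * g v)) := by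
    have : Tendsto (fun k => W k * H k v - M * h k v) atTop
        (𝓝 ((M + φ y) * g v - M * g v)) := (hWlim.mul hHv).sub (hgv.const_mul M)
    have heq2 : (M + φ y) * g v - M * g v = φ y * g v := by ring
    rw [heq2] at this
    have heq3 : (fun k => W k * H k v - M * h k v) = Q := funext fun k => (hQeq k).symm
    rwa [heq3] at this
  -- conclude
  have hgoal : (fun k => φ (∑ᶠ n, c k n • (fs n v • xs n))) = Q := by
    funext k
    rw [hrwX k (fun n => fs n v • xs n), map_sum, hQ]
    apply Finset.sum_congr rfl
    intro n _
    rw [map_smul, smul_eq_mul, map_smul, smul_eq_mul]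
    ring
  rw [hgoal]
  have : φ (g v • y) = φ y * g v := by rw [map_smul, smul_eq_mul]; ring
  rw [this]
  exact hQlim
end

section
/- Let X be a real Banach space, (x_n, f_n) ∈ S_X × S_{X*} Flinn pairs (f_n(x_n)=1 and ‖I - f_n ⊗ x_n‖ = 1), and (y, g) ∈ S_X × S_{X*} with g(y)=1, y smooth. If there exist finitely supported convex coefficients (c_n^{(k)})_n with Σ_n c_n^{(k)} x_n → y weakly and Σ_n c_n^{(k)} f_n(y) → 1 as k → ∞, then (y, g) is a Flinn pair, i.e. ‖I - g ⊗ y‖ = 1. -/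
open Filter Topology

theorem flinn_aux_smooth {X : Type*} [NormedAddCommGroup X] [NormedSpace ℝ X]
    (y : X) (hy : ‖y‖ = 1) (g : StrongDual ℝ X)
    (hsmooth : ∀ h : StrongDual ℝ X, ‖h‖ = 1 → h y = 1 → h = g)
    (v : X) (ε : ℝ) (hε : 0 < ε) :
    ∃ δ > 0, ∀ f : StrongDual ℝ X, ‖f‖ ≤ 1 → 1 - δ ≤ f y → |f v - g v| ≤ ε := by
  by_contra hcon
  push_neg at hcon
  choose F hF1 hF2 hF3 using fun m : ℕ => hcon (1/(m+1)) (by positivity)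
  set Fw : ℕ → WeakDual ℝ X := fun m => StrongDual.toWeakDual (F m) with hFw
  have hK : IsCompact (WeakDual.toStrongDual ⁻¹' Metric.closedBall (0 : StrongDual ℝ X) 1) :=
    WeakDual.isCompact_closedBall (𝕜 := ℝ) 0 1
  have hle : Filter.map Fw Filter.atTop ≤
      Filter.principal (WeakDual.toStrongDual ⁻¹' Metric.closedBall (0 : StrongDual ℝ X) 1) := by
    rw [Filter.le_principal_iff, Filter.mem_map]
    filter_upwards with m
    simpa [hFw, Set.mem_preimage, Metric.mem_closedBall, dist_zero_right] using hF1 m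
  obtain ⟨φw, hφmem, hφcl⟩ := hK.exists_mapClusterPt (u := Fw) hle
  have hφnorm : ‖WeakDual.toStrongDual φw‖ ≤ 1 := by
    simpa [Metric.mem_closedBall, dist_zero_right] using hφmem
  have hFyup : ∀ m, F m y ≤ 1 := by
    intro m
    calc F m y ≤ |F m y| := le_abs_self _
    _ = ‖F m y‖ := (Real.norm_eq_abs _).symm
    _ ≤ ‖F m‖ * ‖y‖ := (F m).le_opNorm y
    _ ≤ 1 := by rw [hy, mul_one]; exact hF1 m
  have hFy : Tendsto (fun m => F m y) atTop (𝓝 1) := by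
    have hlow : Tendsto (fun m : ℕ => 1 - 1/((m:ℝ)+1)) atTop (𝓝 1) := by
      have := tendsto_one_div_add_atTop_nhds_zero_nat (𝕜 := ℝ)
      simpa using (tendsto_const_nhds (x := (1:ℝ)) (f := atTop)).sub this
    exact tendsto_of_tendsto_of_tendsto_of_le_of_le hlow tendsto_const_nhds
      (fun m => hF2 m) hFyup
  have hcy : MapClusterPt (φw y) atTop (fun m => Fw m y) :=
    hφcl.continuousAt_comp (WeakDual.eval_continuous y).continuousAt
  have h1 : φw y = 1 := eq_of_nhds_neBot (hcy.clusterPt.mono hFy)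
  have hcv : MapClusterPt (φw v) atTop (fun m => Fw m v) :=
    hφcl.continuousAt_comp (WeakDual.eval_continuous v).continuousAt
  have hC : IsClosed {r : ℝ | ε ≤ |r - g v|} :=
    isClosed_le continuous_const ((continuous_id.sub continuous_const).abs)
  have h2 : ε ≤ |φw v - g v| := by
    have hmem : φw v ∈ closure {r : ℝ | ε ≤ |r - g v|} := by
      refine mem_closure_iff_clusterPt.2 (hcv.clusterPt.mono (le_principal_iff.2 ?_))
      rw [Filter.mem_map]
      filter_upwards with m
      exact (hF3 m).le
    rwa [hC.closure_eq] at hmem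
  have hφeq : WeakDual.toStrongDual φw = g := by
    refine hsmooth _ (le_antisymm hφnorm ?_) h1
    calc (1:ℝ) = φw y := h1.symm
    _ ≤ |φw y| := le_abs_self _
    _ = ‖(WeakDual.toStrongDual φw) y‖ := rfl
    _ ≤ ‖WeakDual.toStrongDual φw‖ * ‖y‖ := (WeakDual.toStrongDual φw).le_opNorm y
    _ = ‖WeakDual.toStrongDual φw‖ := by rw [hy, mul_one]
  have : φw v = g v := by rw [← hφeq]; rfl
  rw [this, sub_self, abs_zero] at h2
  exact absurd h2 (not_le.2 hε)


theorem flinn_key {X : Type*} [NormedAddCommGroup X] [NormedSpace ℝ X] [CompleteSpace X]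
    (xs : ℕ → X) (fs : ℕ → StrongDual ℝ X)
    (hxs : ∀ n, ‖xs n‖ = 1) (hfs : ∀ n, ‖fs n‖ = 1)
    (hFlinn : ∀ n, ‖ContinuousLinearMap.id ℝ X - (fs n).smulRight (xs n)‖ = 1)
    (y : X) (g : StrongDual ℝ X) (hy : ‖y‖ = 1)
    (hsmooth : ∀ h : StrongDual ℝ X, ‖h‖ = 1 → h y = 1 → h = g)
    (c : ℕ → ℕ → ℝ) (hc0 : ∀ k n, 0 ≤ c k n)
    (hcfin : ∀ k, (Function.support (c k)).Finite) (hcsum : ∀ k, ∑ᶠ n, c k n = 1)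
    (hweak : ∀ φ : StrongDual ℝ X,
      Tendsto (fun k => φ (∑ᶠ n, c k n • xs n)) atTop (𝓝 (φ y)))
    (hfy : Tendsto (fun k => ∑ᶠ n, c k n * fs n y) atTop (𝓝 1))
    (v : X) : ‖v - g v • y‖ ≤ ‖v‖ := by
  classical
  set t := g v with ht
  by_cases hvz : v - t • y = 0
  · rw [hvz, norm_zero]; exact norm_nonneg v
  obtain ⟨ψ, hψ1, hψx⟩ := exists_dual_vector ℝ (v - t • y) (norm_ne_zero_iff.2 hvz)
  set s : ℕ → Finset ℕ := fun k => (hcfin k).toFinset with hs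
  have hsupc : ∀ k, ∀ n ∉ s k, c k n = 0 := by
    intro k n hn
    by_contra h
    exact hn ((hcfin k).mem_toFinset.2 h)
  have hsum' : ∀ k, ∑ n ∈ s k, c k n = 1 := by
    intro k
    rw [← hcsum k]
    exact (finsum_eq_sum (c k) (hcfin k)).symm
  have hz : ∀ k, (∑ᶠ n, c k n • xs n) = ∑ n ∈ s k, c k n • xs n := by
    intro k
    refine finsum_eq_sum_of_support_subset _ ?_
    intro n hn
    simp only [Function.mem_support] at hn
    exact (hcfin k).mem_toFinset.2 (fun h => hn (by rw [h, zero_smul]))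
  have hfy' : ∀ k, (∑ᶠ n, c k n * fs n y) = ∑ n ∈ s k, c k n * fs n y := by
    intro k
    refine finsum_eq_sum_of_support_subset _ ?_
    intro n hn
    simp only [Function.mem_support] at hn
    exact (hcfin k).mem_toFinset.2 (fun h => hn (by rw [h, zero_mul]))
  -- each fs n y ≤ 1
  have hfny : ∀ n, fs n y ≤ 1 := by
    intro n
    calc fs n y ≤ |fs n y| := le_abs_self _
    _ = ‖fs n y‖ := (Real.norm_eq_abs _).symm
    _ ≤ ‖fs n‖ * ‖y‖ := (fs n).le_opNorm y
    _ = 1 := by rw [hfs n, hy, mul_one]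
  -- E k tends to 0
  set E : ℕ → ℝ := fun k => ∑ n ∈ s k, c k n * |fs n v - t| with hE
  have hE0 : ∀ k, 0 ≤ E k := by
    intro k
    refine Finset.sum_nonneg fun n _ => mul_nonneg (hc0 k n) (abs_nonneg _)
  set D : ℕ → ℝ := fun k => ∑ n ∈ s k, c k n * (1 - fs n y) with hD
  have hD0 : ∀ k, 0 ≤ D k := by
    intro k
    exact Finset.sum_nonneg fun n _ => mul_nonneg (hc0 k n) (by linarith [hfny n])
  have hDlim : Tendsto D atTop (𝓝 0) := by
    have : ∀ k, D k = 1 - ∑ᶠ n, c k n * fs n y := by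
      intro k
      rw [hfy' k, hD]
      simp only [mul_sub, mul_one, Finset.sum_sub_distrib, hsum' k]
    simp only [funext this]
    have := (tendsto_const_nhds (x := (1:ℝ)) (f := atTop (α := ℕ))).sub hfy
    simpa using this
  have hElim : Tendsto E atTop (𝓝 0) := by
    rw [Metric.tendsto_atTop]
    intro ε hε
    obtain ⟨δ, hδpos, hδ⟩ := flinn_aux_smooth y hy g hsmooth v (ε/4) (by positivity)
    set M : ℝ := ‖v‖ + |t| + 1 with hM
    have hMpos : 0 < M := by positivity
    have habsbd : ∀ n, |fs n v - t| ≤ M := by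
      intro n
      have h1 : |fs n v| ≤ ‖v‖ := by
        calc |fs n v| = ‖fs n v‖ := rfl
        _ ≤ ‖fs n‖ * ‖v‖ := (fs n).le_opNorm v
        _ = ‖v‖ := by rw [hfs n, one_mul]
      calc |fs n v - t| ≤ |fs n v| + |t| := abs_sub _ _
      _ ≤ M := by rw [hM]; linarith
    obtain ⟨N, hN⟩ := (Metric.tendsto_atTop.1 hDlim) (δ * ε / (4 * M)) (by positivity)
    refine ⟨N, fun k hk => ?_⟩
    have hterm : ∀ n ∈ s k, c k n * |fs n v - t| ≤
        c k n * (ε/4) + (M/δ) * (c k n * (1 - fs n y)) := by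
      intro n _
      by_cases hgood : 1 - δ ≤ fs n y
      · have h1 : |fs n v - t| ≤ ε/4 := by rw [ht]; exact hδ (fs n) (le_of_eq (hfs n)) hgood
        have h2 : 0 ≤ (M/δ) * (c k n * (1 - fs n y)) :=
          mul_nonneg (div_nonneg hMpos.le hδpos.le)
            (mul_nonneg (hc0 k n) (by linarith [hfny n]))
        calc c k n * |fs n v - t| ≤ c k n * (ε/4) :=
              mul_le_mul_of_nonneg_left h1 (hc0 k n)
          _ ≤ c k n * (ε/4) + (M/δ) * (c k n * (1 - fs n y)) := le_add_of_nonneg_right h2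
      · push_neg at hgood
        have h1 : δ ≤ 1 - fs n y := by linarith
        have h2 : c k n * |fs n v - t| ≤ c k n * M :=
          mul_le_mul_of_nonneg_left (habsbd n) (hc0 k n)
        have h3 : c k n * M ≤ (M/δ) * (c k n * (1 - fs n y)) := by
          rw [div_mul_eq_mul_div, le_div_iff₀ hδpos]
          nlinarith [mul_le_mul_of_nonneg_left h1 (mul_nonneg hMpos.le (hc0 k n))]
        have h4 : 0 ≤ c k n * (ε/4) := mul_nonneg (hc0 k n) (by positivity)
        calc c k n * |fs n v - t| ≤ (M/δ) * (c k n * (1 - fs n y)) := h2.trans h3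
          _ ≤ c k n * (ε/4) + (M/δ) * (c k n * (1 - fs n y)) := le_add_of_nonneg_left h4
    have hEk : E k ≤ ε/4 + (M/δ) * D k := by
      calc E k ≤ ∑ n ∈ s k, (c k n * (ε/4) + (M/δ) * (c k n * (1 - fs n y))) :=
        Finset.sum_le_sum hterm
      _ = (∑ n ∈ s k, c k n) * (ε/4) + (M/δ) * D k := by
        rw [Finset.sum_add_distrib, ← Finset.sum_mul, ← Finset.mul_sum, hD]
      _ = ε/4 + (M/δ) * D k := by rw [hsum' k, one_mul]
    have hDk : D k < δ * ε / (4 * M) := by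
      have := hN k hk
      rwa [Real.dist_eq, sub_zero, abs_of_nonneg (hD0 k)] at this
    have : (M/δ) * D k < ε/4 := by
      have h1 : (M/δ) * D k < (M/δ) * (δ * ε / (4 * M)) :=
        mul_lt_mul_of_pos_left hDk (by positivity)
      have h2 : (M/δ) * (δ * ε / (4 * M)) = ε/4 := by
        field_simp
      linarith
    rw [Real.dist_eq, sub_zero, abs_of_nonneg (hE0 k)]
    linarith
  -- pointwise bound
  have hptwise : ∀ k, ψ v - t * ψ (∑ n ∈ s k, c k n • xs n) ≤ ‖v‖ + E k := by
    intro k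
    have hrw : v - t • (∑ n ∈ s k, c k n • xs n) = ∑ n ∈ s k, c k n • (v - t • xs n) := by
      have e1 : ∑ n ∈ s k, c k n • (v - t • xs n)
          = (∑ n ∈ s k, c k n • v) - ∑ n ∈ s k, c k n • t • xs n := by
        rw [← Finset.sum_sub_distrib]
        exact Finset.sum_congr rfl fun n _ => smul_sub _ _ _
      have e2 : (∑ n ∈ s k, c k n • v) = v := by
        rw [← Finset.sum_smul, hsum' k, one_smul]
      have e3 : ∑ n ∈ s k, c k n • t • xs n = t • ∑ n ∈ s k, c k n • xs n := by
        rw [Finset.smul_sum]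
        exact Finset.sum_congr rfl fun n _ => (smul_comm _ _ _)
      rw [e1, e2, e3]
    have hbd : ∀ n, ‖v - t • xs n‖ ≤ ‖v‖ + |fs n v - t| := by
      intro n
      have hfl : ‖v - fs n v • xs n‖ ≤ ‖v‖ := by
        have := (ContinuousLinearMap.id ℝ X - (fs n).smulRight (xs n)).le_opNorm v
        rw [hFlinn n, one_mul] at this
        simpa using this
      have hsplit : v - t • xs n = (v - fs n v • xs n) + (fs n v - t) • xs n := by
        rw [sub_smul]; abel
      calc ‖v - t • xs n‖ ≤ ‖v - fs n v • xs n‖ + ‖(fs n v - t) • xs n‖ := by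
            rw [hsplit]; exact norm_add_le _ _
      _ = ‖v - fs n v • xs n‖ + |fs n v - t| := by
            rw [norm_smul, Real.norm_eq_abs, hxs n, mul_one]
      _ ≤ ‖v‖ + |fs n v - t| := add_le_add hfl le_rfl
    have hlin : ψ v - t * ψ (∑ n ∈ s k, c k n • xs n)
        = ψ (v - t • (∑ n ∈ s k, c k n • xs n)) := by
      simp [map_sub, map_smul, smul_eq_mul]
    calc ψ v - t * ψ (∑ n ∈ s k, c k n • xs n)
        = ψ (v - t • (∑ n ∈ s k, c k n • xs n)) := hlin
      _ ≤ ‖ψ (v - t • (∑ n ∈ s k, c k n • xs n))‖ := le_abs_self _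
      _ ≤ ‖ψ‖ * ‖v - t • (∑ n ∈ s k, c k n • xs n)‖ := ψ.le_opNorm _
      _ = ‖∑ n ∈ s k, c k n • (v - t • xs n)‖ := by rw [hψ1, one_mul, hrw]
      _ ≤ ∑ n ∈ s k, ‖c k n • (v - t • xs n)‖ := norm_sum_le _ _
      _ ≤ ∑ n ∈ s k, c k n * (‖v‖ + |fs n v - t|) := by
          refine Finset.sum_le_sum fun n _ => ?_
          rw [norm_smul, Real.norm_eq_abs, abs_of_nonneg (hc0 k n)]
          exact mul_le_mul_of_nonneg_left (hbd n) (hc0 k n)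
      _ = ‖v‖ + E k := by
          simp only [mul_add, Finset.sum_add_distrib, ← Finset.sum_mul, hsum' k, one_mul, hE]
  -- take limits
  have hlim : Tendsto (fun k => ψ v - t * ψ (∑ n ∈ s k, c k n • xs n) - E k) atTop
      (𝓝 (ψ v - t * ψ y)) := by
    have h1 : Tendsto (fun k => ψ (∑ n ∈ s k, c k n • xs n)) atTop (𝓝 (ψ y)) := by
      have := hweak ψ
      simpa only [hz] using this
    have h2 := ((tendsto_const_nhds (x := ψ v) (f := atTop (α := ℕ))).sub
      (h1.const_mul t)).sub hElim
    simpa using h2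
  have hfinal : ψ v - t * ψ y ≤ ‖v‖ :=
    le_of_tendsto hlim (Filter.Eventually.of_forall fun k => by linarith [hptwise k])
  have hψx' : ψ (v - t • y) = ‖v - t • y‖ := by exact_mod_cast hψx
  have hexp : ψ (v - t • y) = ψ v - t * ψ y := by simp [map_sub, map_smul, smul_eq_mul]
  calc ‖v - t • y‖ = ψ v - t * ψ y := by rw [← hψx', hexp]
    _ ≤ ‖v‖ := hfinal

/-- Lemma 2.4 (last part): under the same approximation hypotheses, if each `(x_n, f_n)` is a
Flinn pair then `(y, g)` is a Flinn pair, i.e. `‖I - g ⊗ y‖ = 1`. -/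
theorem stmt15 {X : Type*} [NormedAddCommGroup X] [NormedSpace ℝ X] [CompleteSpace X]
    (xs : ℕ → X) (fs : ℕ → StrongDual ℝ X)
    (hxs : ∀ n, ‖xs n‖ = 1) (hfs : ∀ n, ‖fs n‖ = 1) (hpair : ∀ n, fs n (xs n) = 1)
    (hFlinn : ∀ n, ‖ContinuousLinearMap.id ℝ X - (fs n).smulRight (xs n)‖ = 1)
    (y : X) (g : StrongDual ℝ X) (hy : ‖y‖ = 1) (hg : ‖g‖ = 1) (hgy : g y = 1)
    (hsmooth : ∀ h : StrongDual ℝ X, ‖h‖ = 1 → h y = 1 → h = g)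
    (c : ℕ → ℕ → ℝ) (hc0 : ∀ k n, 0 ≤ c k n)
    (hcfin : ∀ k, (Function.support (c k)).Finite) (hcsum : ∀ k, ∑ᶠ n, c k n = 1)
    (hweak : ∀ φ : StrongDual ℝ X,
      Tendsto (fun k => φ (∑ᶠ n, c k n • xs n)) atTop (𝓝 (φ y)))
    (hfy : Tendsto (fun k => ∑ᶠ n, c k n * fs n y) atTop (𝓝 1)) :
    ‖ContinuousLinearMap.id ℝ X - g.smulRight y‖ = 1 := by
  set S : X →L[ℝ] X := ContinuousLinearMap.id ℝ X - g.smulRight y with hS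
  have hSapp : ∀ v : X, S v = v - g v • y := by
    intro v
    simp [hS]
  -- upper bound
  have hub : ‖S‖ ≤ 1 := by
    refine ContinuousLinearMap.opNorm_le_bound _ zero_le_one (fun v => ?_)
    rw [hSapp v, one_mul]
    exact flinn_key xs fs hxs hfs hFlinn y g hy hsmooth c hc0 hcfin hcsum hweak hfy v
  -- S is idempotent
  have hidem : S.comp S = S := by
    ext v
    simp only [ContinuousLinearMap.comp_apply, hSapp, map_sub, map_smul, smul_eq_mul,
      hgy, mul_one, sub_self, zero_smul, sub_zero]
  have hlb : 1 ≤ ‖S‖ := by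
    rcases eq_or_lt_of_le (norm_nonneg S) with h0 | h0
    · -- ‖S‖ = 0, S = 0, contradiction with hFlinn 0
      exfalso
      have hS0 : S = 0 := by
        rw [← norm_le_zero_iff]
        exact le_of_eq h0.symm
      have hv : ∀ w : X, w = g w • y := by
        intro w
        have := hSapp w
        rw [hS0] at this
        simp only [ContinuousLinearMap.zero_apply] at this
        have := this.symm
        rwa [sub_eq_zero] at this
      have hT : (ContinuousLinearMap.id ℝ X - (fs 0).smulRight (xs 0)) = 0 := by
        ext w
        simp only [ContinuousLinearMap.sub_apply, ContinuousLinearMap.id_apply,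
          ContinuousLinearMap.smulRight_apply, ContinuousLinearMap.zero_apply]
        rw [sub_eq_zero]
        have hw : w = g w • y := hv w
        have hx0 : xs 0 = g (xs 0) • y := hv (xs 0)
        have hfw : fs 0 w = g w * fs 0 y := by
          conv_lhs => rw [hw]
          rw [map_smul, smul_eq_mul]
        have hfx : g (xs 0) * fs 0 y = 1 := by
          have := hpair 0
          conv_lhs at this => rw [hx0]
          rwa [map_smul, smul_eq_mul] at this
        conv_lhs => rw [hw]
        rw [hfw]
        conv_rhs => rw [hx0]
        rw [smul_smul]
        congr 1
        rw [mul_assoc, mul_comm ((fs 0) y), hfx, mul_one]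
      have := hFlinn 0
      rw [hT, norm_zero] at this
      exact zero_ne_one this
    · -- 0 < ‖S‖, use idempotence
      have h1 : ‖S‖ ≤ ‖S‖ * ‖S‖ := by
        conv_lhs => rw [← hidem]
        exact ContinuousLinearMap.opNorm_comp_le S S
      nlinarith
  exact le_antisymm hub hlb
end

section
/- Let X be a real Banach space that is convex-transitive with respect to a subgroup G⁰ of its isometry group, let C ⊆ S_X be norm-dense in S_X, and let A ⊆ X be a closed subspace of infinite density character κ. Then there exists a closed subspace Y ⊆ X with A ⊆ Y, dens(Y) = κ, such that Y is convex-transitive with respect to the subgroup {T|_Y : T ∈ G⁰, T(Y) = Y} of isometries of Y, and C ∩ S_Y is dense in S_Y. -/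
open Filter Topology Cardinal

/-- The density character of a topological space: the least cardinality of a dense subset. -/
noncomputable def densChar (α : Type*) [TopologicalSpace α] : Cardinal :=
  sInf {c : Cardinal | ∃ s : Set α, Dense s ∧ Cardinal.mk s = c}

lemma densChar_le_of_dense {α : Type*} [TopologicalSpace α] {s : Set α} (hs : Dense s) :
    densChar α ≤ #s := csInf_le' ⟨s, hs, rfl⟩

lemma exists_dense_densChar (α : Type*) [TopologicalSpace α] :
    ∃ s : Set α, Dense s ∧ #s = densChar α := by
  have : {c : Cardinal | ∃ s : Set α, Dense s ∧ Cardinal.mk s = c}.Nonempty :=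
    ⟨#(Set.univ : Set α), Set.univ, dense_univ, rfl⟩
  exact csInf_mem this

lemma densChar_le_mk (α : Type*) [TopologicalSpace α] : densChar α ≤ #α := by
  have := densChar_le_of_dense (dense_univ (X := α))
  simpa using this

lemma aleph0_le_densChar {α : Type*} [MetricSpace α] [Infinite α] : ℵ₀ ≤ densChar α := by
  obtain ⟨s, hs, hmk⟩ := exists_dense_densChar α
  rw [← hmk]
  by_contra h
  push_neg at h
  have hfin : s.Finite := Cardinal.lt_aleph0_iff_set_finite.1 h
  have huniv : (Set.univ : Set α) ⊆ s := by
    rw [← hfin.isClosed.closure_eq, hs.closure_eq]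
  exact Set.infinite_univ (hfin.subset huniv)

lemma densChar_mono_subset {α : Type*} [MetricSpace α] {s t : Set α} (hst : s ⊆ t) :
    densChar s ≤ max ℵ₀ (densChar t) := by
  obtain ⟨d, hd, hmk⟩ := exists_dense_densChar ↥t
  have hd' : ∀ p ∈ t, ∀ ε > 0, ∃ q ∈ Subtype.val '' d, dist p q < ε := by
    intro p hp ε hε
    have h1 : (⟨p, hp⟩ : t) ∈ closure d := hd _
    rw [closure_subtype, Metric.mem_closure_iff] at h1
    exact h1 ε hε
  have hch : ∀ (p : α) (n : ℕ), ∃ q,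
      (∃ q' ∈ s, dist p q' < 1 / (n + 1)) → q ∈ s ∧ dist p q < 1 / (n + 1) := by
    intro p n
    by_cases h : ∃ q' ∈ s, dist p q' < 1 / (n + 1)
    · obtain ⟨q, hq1, hq2⟩ := h
      exact ⟨q, fun _ => ⟨hq1, hq2⟩⟩
    · exact ⟨p, fun hc => absurd hc h⟩
  choose f hf using hch
  set e : Set α := Set.range (fun pn : ↥(Subtype.val '' d) × ℕ => f ↑pn.1 pn.2) ∩ s with he
  have hes : e ⊆ s := Set.inter_subset_right
  have hedense : ∀ q0 ∈ s, ∀ ε > 0, ∃ q ∈ e, dist q0 q < ε := by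
    intro q0 hq0 ε hε
    obtain ⟨n, hn⟩ := exists_nat_one_div_lt (show (0:ℝ) < ε / 2 by linarith)
    obtain ⟨p, hp, hpd⟩ := hd' q0 (hst hq0) (1 / (n + 1)) (by positivity)
    have hwit : ∃ q' ∈ s, dist p q' < 1 / (n + 1) := ⟨q0, hq0, by rwa [dist_comm]⟩
    obtain ⟨hfs, hfd⟩ := hf p n hwit
    refine ⟨f p n, ⟨⟨⟨⟨p, hp⟩, n⟩, rfl⟩, hfs⟩, ?_⟩
    calc dist q0 (f p n) ≤ dist q0 p + dist p (f p n) := dist_triangle _ _ _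
      _ < 1 / (n + 1) + 1 / (n + 1) := by linarith
      _ < ε := by linarith
  have hdense2 : Dense (Subtype.val ⁻¹' e : Set ↥s) := by
    intro x
    rw [closure_subtype]
    have himg : Subtype.val '' (Subtype.val ⁻¹' e : Set ↥s) = e := by
      apply Set.image_preimage_eq_of_subset
      rw [Subtype.range_coe]
      exact hes
    rw [himg, Metric.mem_closure_iff]
    exact hedense ↑x x.2
  calc densChar ↥s ≤ #(Subtype.val ⁻¹' e : Set ↥s) := densChar_le_of_dense hdense2
    _ ≤ #e := mk_preimage_of_injective _ _ Subtype.val_injective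
    _ ≤ #(Set.range (fun pn : ↥(Subtype.val '' d) × ℕ => f ↑pn.1 pn.2)) :=
        mk_le_mk_of_subset Set.inter_subset_left
    _ ≤ #(↥(Subtype.val '' d) × ℕ) := mk_range_le
    _ ≤ max ℵ₀ (densChar ↥t) := by
        rw [Cardinal.mk_prod]
        have h1 : Cardinal.lift.{0} #(↥(Subtype.val '' d)) ≤ densChar ↥t := by
          rw [Cardinal.lift_uzero]
          calc #(↥(Subtype.val '' d)) ≤ #d := mk_image_le
            _ = densChar ↥t := hmk
        have h2 : Cardinal.lift #(ℕ) = ℵ₀ := by simp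
        rw [h2]
        calc Cardinal.lift.{0} #(↥(Subtype.val '' d)) * ℵ₀
            ≤ max (max (Cardinal.lift.{0} #(↥(Subtype.val '' d))) ℵ₀) ℵ₀ := Cardinal.mul_le_max _ _
          _ ≤ max ℵ₀ (densChar ↥t) := by
              simp only [max_le_iff]
              exact ⟨⟨le_trans h1 (le_max_right _ _), le_max_left _ _⟩, le_max_left _ _⟩

lemma cardAdd_le {a b κ : Cardinal} (hκ : Cardinal.aleph0 ≤ κ) (ha : a ≤ κ) (hb : b ≤ κ) :
    a + b ≤ κ :=
  (Cardinal.add_le_max a b).trans (by simp only [max_le_iff]; exact ⟨⟨ha, hb⟩, hκ⟩)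

lemma cardMul_le {a b κ : Cardinal} (hκ : Cardinal.aleph0 ≤ κ) (ha : a ≤ κ) (hb : b ≤ κ) :
    a * b ≤ κ :=
  (Cardinal.mul_le_max a b).trans (by simp only [max_le_iff]; exact ⟨⟨ha, hb⟩, hκ⟩)

set_option maxHeartbeats 1000000 in
/-- Theorem 2.5: in a space `X` convex-transitive with respect to a subgroup `G⁰` of its
isometry group, with `C` norm-dense in the unit sphere, every closed subspace `A` of infinite
density character `κ` is contained in a closed subspace `Y` of density character `κ` which is
convex-transitive with respect to the induced subgroup and in which `C ∩ S_Y` is dense. -/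
theorem stmt18 {X : Type*} [NormedAddCommGroup X] [NormedSpace ℝ X] [CompleteSpace X]
    (G0 : Subgroup (X ≃ₗᵢ[ℝ] X))
    (hct : ∀ x : X, ‖x‖ = 1 →
      closure (convexHull ℝ {y : X | ∃ T ∈ G0, y = T x}) = Metric.closedBall (0 : X) 1)
    (C : Set X) (hC1 : ∀ x ∈ C, ‖x‖ = 1)
    (hCdense : ∀ x : X, ‖x‖ = 1 → x ∈ closure C)
    (A : Submodule ℝ X) (hA : IsClosed (A : Set X))
    (κ : Cardinal) (hκ : Cardinal.aleph0 ≤ κ) (hdensA : densChar A = κ) :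
    ∃ Y : Submodule ℝ X, IsClosed (Y : Set X) ∧ A ≤ Y ∧ densChar Y = κ ∧
      (∀ y : Y, ‖y‖ = 1 →
        closure (convexHull ℝ
          {z : Y | ∃ T ∈ G0, (T : X ≃ₗᵢ[ℝ] X) '' (Y : Set X) = (Y : Set X) ∧
            (z : X) = T (y : X)}) = Metric.closedBall (0 : Y) 1) ∧
      ∀ y : X, y ∈ Y → ‖y‖ = 1 → y ∈ closure (C ∩ (Y : Set X)) := by
  classical
  -- normalization norm lemmas
  have normcalc : ∀ x : X, x ≠ 0 → ‖‖x‖⁻¹ • x - x‖ = |1 - ‖x‖| := by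
    intro x hx
    have hxn : ‖x‖ ≠ 0 := norm_ne_zero_iff.2 hx
    have h1 : ‖x‖⁻¹ • x - x = (‖x‖⁻¹ - 1) • x := by
      rw [sub_smul, one_smul]
    rw [h1, norm_smul, Real.norm_eq_abs, ← abs_of_nonneg (norm_nonneg x), ← abs_mul]
    congr 1
    field_simp
    rw [abs_of_nonneg (norm_nonneg x)]; ring
  have nlem1 : ∀ x y : X, ‖y‖ = 1 → x ≠ 0 → ‖‖x‖⁻¹ • x - y‖ ≤ 2 * ‖x - y‖ := by
    intro x y hy hx
    have h2 : |1 - ‖x‖| = |‖y‖ - ‖x‖| := by rw [hy]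
    have h3 : |‖y‖ - ‖x‖| ≤ ‖y - x‖ := abs_norm_sub_norm_le y x
    have h4 : ‖y - x‖ = ‖x - y‖ := norm_sub_rev y x
    calc ‖‖x‖⁻¹ • x - y‖ = ‖(‖x‖⁻¹ • x - x) + (x - y)‖ := by rw [sub_add_sub_cancel]
      _ ≤ ‖‖x‖⁻¹ • x - x‖ + ‖x - y‖ := norm_add_le _ _
      _ = |1 - ‖x‖| + ‖x - y‖ := by rw [normcalc x hx]
      _ ≤ ‖x - y‖ + ‖x - y‖ := by rw [h2]; nlinarith [h3, h4.symm.le]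
      _ = 2 * ‖x - y‖ := by ring
  have nlem2 : ∀ z z' : X, ‖z‖ ≤ 1 → ‖(max 1 ‖z'‖)⁻¹ • z' - z‖ ≤ 2 * ‖z' - z‖ := by
    intro z z' hz
    rcases le_or_gt ‖z'‖ 1 with h | h
    · rw [max_eq_left h, inv_one, one_smul]
      nlinarith [norm_nonneg (z' - z)]
    · have hz'0 : z' ≠ 0 := by
        intro hc
        rw [hc, norm_zero] at h
        linarith
      rw [max_eq_right h.le]
      have h5 : ‖‖z'‖⁻¹ • z' - z'‖ = |1 - ‖z'‖| := normcalc z' hz'0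
      have h6 : |1 - ‖z'‖| = ‖z'‖ - 1 := by rw [abs_of_nonpos (by linarith)]; ring
      have h7 : ‖z‖ ≥ ‖z'‖ - ‖z' - z‖ := by
        have := norm_sub_norm_le z' z
        linarith
      calc ‖‖z'‖⁻¹ • z' - z‖ = ‖(‖z'‖⁻¹ • z' - z') + (z' - z)‖ := by rw [sub_add_sub_cancel]
        _ ≤ ‖‖z'‖⁻¹ • z' - z'‖ + ‖z' - z‖ := norm_add_le _ _
        _ = (‖z'‖ - 1) + ‖z' - z‖ := by rw [h5, h6]
        _ ≤ 2 * ‖z' - z‖ := by linarith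
  -- base dense set in A
  obtain ⟨D0, hD0dense, hD0mk⟩ := exists_dense_densChar ↥A
  set D0' : Set X := Subtype.val '' D0 with hD0'def
  have hD0'A : D0' ⊆ (A : Set X) := by rintro _ ⟨p, _, rfl⟩; exact p.2
  have hD0'cl : (A : Set X) ⊆ closure D0' := by
    intro a ha
    have := hD0dense ⟨a, ha⟩
    rwa [closure_subtype] at this
  have hD0'mk : #D0' = κ := by
    rw [hD0'def, Cardinal.mk_image_eq Subtype.val_injective, hD0mk, hdensA]
  -- skolemized approximation data
  have hPex : ∀ (x z : X) (m : ℕ), ∃ (k : ℕ) (T : Fin k → (X ≃ₗᵢ[ℝ] X)) (lam : Fin k → ℝ),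
      x ≠ 0 → (∀ i, T i ∈ G0) ∧ (∀ i, 0 ≤ lam i) ∧ (∑ i, lam i) = 1 ∧
        ‖(max 1 ‖z‖)⁻¹ • z - ∑ i, lam i • (T i) (‖x‖⁻¹ • x)‖ < 1 / (m + 1) := by
    intro x z m
    by_cases hx : x = 0
    · exact ⟨0, Fin.elim0, Fin.elim0, fun hc => absurd hx hc⟩
    · have hxn : ‖x‖ ≠ 0 := norm_ne_zero_iff.2 hx
      set u : X := ‖x‖⁻¹ • x with hu
      have hu1 : ‖u‖ = 1 := by
        rw [hu, norm_smul, Real.norm_eq_abs, abs_inv, abs_of_nonneg (norm_nonneg x)]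
        field_simp
      set v : X := (max 1 ‖z‖)⁻¹ • z with hv
      have hmaxpos : (0:ℝ) < max 1 ‖z‖ := lt_of_lt_of_le one_pos (le_max_left _ _)
      have hv1 : v ∈ Metric.closedBall (0 : X) 1 := by
        rw [mem_closedBall_zero_iff, hv, norm_smul, Real.norm_eq_abs, abs_inv,
          abs_of_pos hmaxpos]
        rw [inv_mul_le_one₀ hmaxpos]
        exact le_max_right _ _
      rw [← hct u hu1, Metric.mem_closure_iff] at hv1
      obtain ⟨w, hw, hdistw⟩ := hv1 (1 / (m + 1)) (by positivity)
      rw [convexHull_eq] at hw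
      obtain ⟨ι, t, wt, zt, hw0, hw1, hzt, hcm⟩ := hw
      choose Tc hTcG hTceq using hzt
      refine ⟨t.card, fun j => Tc ↑(t.equivFin.symm j) (t.equivFin.symm j).2,
        fun j => wt ↑(t.equivFin.symm j), fun _ => ⟨?_, ?_, ?_, ?_⟩⟩
      · intro j
        exact hTcG _ _
      · intro j
        exact hw0 _ (t.equivFin.symm j).2
      · rw [Equiv.sum_comp t.equivFin.symm (fun i : ↥t => wt ↑i), Finset.sum_coe_sort t wt]
        exact hw1
      · have hsum : (∑ j, wt ↑(t.equivFin.symm j) •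
            (Tc ↑(t.equivFin.symm j) (t.equivFin.symm j).2) u) = w := by
          rw [Equiv.sum_comp t.equivFin.symm (fun i : ↥t => wt ↑i • (Tc ↑i i.2) u)]
          have h8 : ∀ i : ↥t, wt ↑i • (Tc ↑i i.2) u = wt ↑i • zt ↑i := by
            intro i
            rw [← hTceq ↑i i.2]
          rw [Finset.sum_congr rfl (fun i _ => h8 i)]
          rw [Finset.sum_coe_sort t (fun a => wt a • zt a)]
          rw [← Finset.centerMass_eq_of_sum_1 t zt hw1]
          exact hcm
        rw [hsum, ← dist_eq_norm]
        exact hdistw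
  choose K Tf Lf hwho using hPex
  have hcptex : ∀ (x : X) (m : ℕ), ∃ c, x ≠ 0 → c ∈ C ∧ ‖‖x‖⁻¹ • x - c‖ < 1 / (m + 1) := by
    intro x m
    by_cases hx : x = 0
    · exact ⟨0, fun hc => absurd hx hc⟩
    · have hxn : ‖x‖ ≠ 0 := norm_ne_zero_iff.2 hx
      have hu1 : ‖‖x‖⁻¹ • x‖ = 1 := by
        rw [norm_smul, Real.norm_eq_abs, abs_inv, abs_of_nonneg (norm_nonneg x)]
        field_simp
      have := hCdense _ hu1
      rw [Metric.mem_closure_iff] at this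
      obtain ⟨c, hc1, hc2⟩ := this (1 / (m + 1)) (by positivity)
      rw [dist_eq_norm] at hc2
      exact ⟨c, fun _ => ⟨hc1, hc2⟩⟩
  choose cpt hcpt using hcptex
  have hsepex : ∀ F : Finset X, ∃ sF : Set X, sF.Countable ∧
      sF ⊆ (Submodule.span ℝ (F : Set X) : Set X) ∧
      (Submodule.span ℝ (F : Set X) : Set X) ⊆ closure sF := by
    intro F
    obtain ⟨d, hd1, hd2⟩ := TopologicalSpace.exists_countable_dense ↥(Submodule.span ℝ (F : Set X))
    refine ⟨Subtype.val '' d, hd1.image _, ?_, ?_⟩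
    · rintro _ ⟨p, _, rfl⟩
      exact p.2
    · intro p hp
      have h9 : (⟨p, hp⟩ : ↥(Submodule.span ℝ (F : Set X))) ∈ closure d := hd2 _
      rwa [closure_subtype] at h9
  choose sep hsep1 hsep2 hsep3 using hsepex
  -- the recursion
  let step : Set X × Set (X ≃ₗᵢ[ℝ] X) → Set X × Set (X ≃ₗᵢ[ℝ] X) := fun DG =>
    let G' := DG.2 ∪ ⋃ p : ↥DG.1 × ↥DG.1 × ℕ, Set.range (Tf ↑p.1 ↑p.2.1 p.2.2)
    ⟨DG.1 ∪ ((⋃ T : ↥G', (((T : ↥G') : X ≃ₗᵢ[ℝ] X) '' DG.1 ∪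
          (((T : ↥G') : X ≃ₗᵢ[ℝ] X)).symm '' DG.1))
        ∪ (⋃ p : ↥DG.1 × ℕ, {cpt ↑p.1 p.2})
        ∪ (⋃ F : Finset ↥DG.1, sep (F.image Subtype.val))), G'⟩
  let P : ℕ → Set X × Set (X ≃ₗᵢ[ℝ] X) := fun n => Nat.rec (D0', ∅) (fun _ ih => step ih) n
  set Dn : ℕ → Set X := fun n => (P n).1 with hDn
  set Gn : ℕ → Set (X ≃ₗᵢ[ℝ] X) := fun n => (P n).2 with hGn
  have hD0eq : Dn 0 = D0' := rfl
  have hGsucc : ∀ n, Gn (n + 1) =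
      Gn n ∪ ⋃ p : ↥(Dn n) × ↥(Dn n) × ℕ, Set.range (Tf ↑p.1 ↑p.2.1 p.2.2) := fun n => rfl
  have hDsucc : ∀ n, Dn (n + 1) = Dn n ∪
      ((⋃ T : ↥(Gn (n + 1)), (((T : ↥(Gn (n+1))) : X ≃ₗᵢ[ℝ] X) '' Dn n ∪
          (((T : ↥(Gn (n+1))) : X ≃ₗᵢ[ℝ] X)).symm '' Dn n))
        ∪ (⋃ p : ↥(Dn n) × ℕ, {cpt ↑p.1 p.2})
        ∪ (⋃ F : Finset ↥(Dn n), sep (F.image Subtype.val))) := fun n => rfl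
  -- monotonicity
  have hDsub : ∀ n, Dn n ⊆ Dn (n + 1) := by
    intro n
    rw [hDsucc n]
    exact Set.subset_union_left
  have hGsub : ∀ n, Gn n ⊆ Gn (n + 1) := by
    intro n
    rw [hGsucc n]
    exact Set.subset_union_left
  have hDmono : ∀ {n m : ℕ}, n ≤ m → Dn n ⊆ Dn m := by
    intro n m hnm
    induction m with
    | zero => simp_all
    | succ m ih =>
      rcases Nat.lt_or_ge n (m+1) with h | h
      · exact (ih (Nat.lt_succ_iff.1 h)).trans (hDsub m)
      · have : n = m + 1 := le_antisymm hnm h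
        subst this; exact subset_rfl
  have hGmono : ∀ {n m : ℕ}, n ≤ m → Gn n ⊆ Gn m := by
    intro n m hnm
    induction m with
    | zero => simp_all
    | succ m ih =>
      rcases Nat.lt_or_ge n (m+1) with h | h
      · exact (ih (Nat.lt_succ_iff.1 h)).trans (hGsub m)
      · have : n = m + 1 := le_antisymm hnm h
        subst this; exact subset_rfl
  set Dinf : Set X := ⋃ n, Dn n with hDinf
  set Ginf : Set (X ≃ₗᵢ[ℝ] X) := ⋃ n, Gn n with hGinf
  -- membership lemmas
  have hTmem : ∀ n (x z : X) (m : ℕ), x ∈ Dn n → z ∈ Dn n → ∀ i, Tf x z m i ∈ Gn (n + 1) := by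
    intro n x z m hx hz i
    rw [hGsucc n]
    exact Set.mem_union_right _ (Set.mem_iUnion.2 ⟨⟨⟨x, hx⟩, ⟨z, hz⟩, m⟩, ⟨i, rfl⟩⟩)
  have himgmem : ∀ n, ∀ T ∈ Gn (n + 1), ∀ p ∈ Dn n,
      T p ∈ Dn (n + 1) ∧ T.symm p ∈ Dn (n + 1) := by
    intro n T hT p hp
    rw [hDsucc n]
    constructor
    · exact Set.mem_union_right _ (Set.mem_union_left _ (Set.mem_union_left _
        (Set.mem_iUnion.2 ⟨⟨T, hT⟩, Set.mem_union_left _ ⟨p, hp, rfl⟩⟩)))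
    · exact Set.mem_union_right _ (Set.mem_union_left _ (Set.mem_union_left _
        (Set.mem_iUnion.2 ⟨⟨T, hT⟩, Set.mem_union_right _ ⟨p, hp, rfl⟩⟩)))
  have hcptmem : ∀ n, ∀ x ∈ Dn n, ∀ m : ℕ, cpt x m ∈ Dn (n + 1) := by
    intro n x hx m
    rw [hDsucc n]
    exact Set.mem_union_right _ (Set.mem_union_left _ (Set.mem_union_right _
      (Set.mem_iUnion.2 ⟨⟨⟨x, hx⟩, m⟩, rfl⟩)))
  have hsepmem : ∀ n (F : Finset X), ↑F ⊆ Dn n → sep F ⊆ Dn (n + 1) := by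
    intro n F hF
    have : ∃ F' : Finset ↥(Dn n), F'.image Subtype.val = F := by
      refine ⟨F.attach.map ⟨fun q => (⟨q.1, hF q.2⟩ : ↥(Dn n)), ?_⟩, ?_⟩
      · intro a b hab
        simp only [Subtype.mk.injEq] at hab
        exact Subtype.ext hab
      · ext q
        simp only [Finset.mem_image, Finset.mem_map, Finset.mem_attach,
          Function.Embedding.coeFn_mk, true_and]
        constructor
        · rintro ⟨r, ⟨r', rfl⟩, rfl⟩; exact r'.2
        · intro hq; exact ⟨⟨q, hF hq⟩, ⟨⟨q, hq⟩, rfl⟩, rfl⟩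
    obtain ⟨F', rfl⟩ := this
    rw [hDsucc n]
    intro q hq
    exact Set.mem_union_right _ (Set.mem_union_right _
      (Set.mem_iUnion.2 ⟨F', hq⟩))
  -- nonemptiness
  have hD0ne : D0'.Nonempty := by
    rw [← Set.nonempty_coe_sort, ← Cardinal.mk_ne_zero_iff, hD0'mk]
    exact ne_of_gt (lt_of_lt_of_le Cardinal.aleph0_pos hκ)
  have hDne : ∀ n, (Dn n).Nonempty := fun n => hD0ne.mono (hDmono (Nat.zero_le n))
  -- cardinality bounds
  have hcard : ∀ n, #(Dn n) ≤ κ ∧ #(Gn n) ≤ κ := by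
    intro n
    induction n with
    | zero =>
      constructor
      · exact le_of_eq hD0'mk
      · show #(∅ : Set (X ≃ₗᵢ[ℝ] X)) ≤ κ
        simp only [Cardinal.mk_emptyCollection]
        exact le_trans (le_of_lt Cardinal.aleph0_pos) hκ
    | succ n ih =>
      obtain ⟨ihD, ihG⟩ := ih
      have hidx : #(↥(Dn n) × ↥(Dn n) × ℕ) ≤ κ := by
        rw [Cardinal.mk_prod, Cardinal.mk_prod]
        simp only [Cardinal.lift_id, Cardinal.lift_uzero, Cardinal.mk_nat, Cardinal.lift_aleph0]
        exact cardMul_le hκ ihD (cardMul_le hκ ihD hκ)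
      have hGcard : #(Gn (n + 1)) ≤ κ := by
        rw [hGsucc n]
        refine le_trans (mk_union_le _ _) (cardAdd_le hκ ihG ?_)
        refine le_trans (mk_iUnion_le _) (cardMul_le hκ hidx (ciSup_le' fun p => ?_))
        exact le_trans (le_of_lt (Cardinal.lt_aleph0_iff_set_finite.2 (Set.finite_range _))) hκ
      refine ⟨?_, hGcard⟩
      rw [hDsucc n]
      refine le_trans (mk_union_le _ _) (cardAdd_le hκ ihD ?_)
      refine le_trans (mk_union_le _ _) (cardAdd_le hκ ?_ ?_)
      · refine le_trans (mk_union_le _ _) (cardAdd_le hκ ?_ ?_)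
        · refine le_trans (mk_iUnion_le _) (cardMul_le hκ hGcard (ciSup_le' fun T => ?_))
          exact le_trans (mk_union_le _ _)
            (cardAdd_le hκ (le_trans mk_image_le ihD) (le_trans mk_image_le ihD))
        · refine le_trans (mk_iUnion_le _) (cardMul_le hκ ?_ (ciSup_le' fun p => ?_))
          · rw [Cardinal.mk_prod]
            simp only [Cardinal.lift_id, Cardinal.lift_uzero, Cardinal.mk_nat,
              Cardinal.lift_aleph0]
            exact cardMul_le hκ ihD hκ
          · simp only [Cardinal.mk_singleton]
            exact le_trans Cardinal.one_le_aleph0 hκ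
      · refine le_trans (mk_iUnion_le _) (cardMul_le hκ ?_ (ciSup_le' fun F => ?_))
        · have hsurj : Function.Surjective (fun l : List ↥(Dn n) => l.toFinset) := by
            intro F
            exact ⟨F.toList, Finset.toList_toFinset F⟩
          refine le_trans (Cardinal.mk_le_of_surjective hsurj) ?_
          have : Nonempty ↥(Dn n) := Set.nonempty_coe_sort.2 (hDne n)
          rw [Cardinal.mk_list_eq_max_mk_aleph0]
          exact max_le ihD hκ
        · exact le_trans (Cardinal.mk_le_aleph0_iff.2
            (Set.countable_coe_iff.2 (hsep1 _))) hκ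
  have hDinfcard : #Dinf ≤ κ := by
    have heq : Dinf = ⋃ n : ULift ℕ, Dn n.down := by
      ext q
      simp only [hDinf, Set.mem_iUnion]
      exact ⟨fun ⟨n, h⟩ => ⟨⟨n⟩, h⟩, fun ⟨n, h⟩ => ⟨n.down, h⟩⟩
    rw [heq]
    refine le_trans (mk_iUnion_le _) (cardMul_le hκ ?_ (ciSup_le' fun n => (hcard n.down).1))
    simp only [Cardinal.mk_uLift, Cardinal.mk_nat, Cardinal.lift_aleph0]
    exact hκ
  -- the space Y
  set Y : Submodule ℝ X := (Submodule.span ℝ Dinf).topologicalClosure with hYdef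
  have hfinsub : ∀ F : Finset X, (F : Set X) ⊆ Dinf → ∃ n, (F : Set X) ⊆ Dn n := by
    intro F
    induction F using Finset.induction_on with
    | empty => exact fun _ => ⟨0, by simp⟩
    | @insert a F' ha ih =>
      intro hsub
      rw [Finset.coe_insert] at hsub
      obtain ⟨n, hn⟩ := ih (fun q hq => hsub (Set.mem_insert_of_mem _ hq))
      obtain ⟨m, hm⟩ := Set.mem_iUnion.1 (hsub (Set.mem_insert _ _))
      refine ⟨max n m, ?_⟩
      rw [Finset.coe_insert]
      rintro q (rfl | hq)
      · exact hDmono (le_max_right n m) hm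
      · exact hDmono (le_max_left n m) (hn hq)
  have hYset : (Y : Set X) = closure Dinf := by
    have h1 : (Y : Set X) = closure (Submodule.span ℝ Dinf : Set X) :=
      Submodule.topologicalClosure_coe _
    have h2 : (Submodule.span ℝ Dinf : Set X) ⊆ closure Dinf := by
      intro x hx
      obtain ⟨F, hFsub, hxF⟩ := Submodule.mem_span_finite_of_mem_span hx
      obtain ⟨n, hn⟩ := hfinsub F hFsub
      have hx2 : x ∈ closure (sep F) := hsep3 F hxF
      refine closure_mono ?_ hx2
      refine (hsepmem n F hn).trans ?_
      rw [hDinf]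
      exact Set.subset_iUnion Dn (n + 1)
    apply Set.Subset.antisymm
    · rw [h1]
      exact closure_minimal h2 isClosed_closure
    · rw [h1]
      exact closure_mono Submodule.subset_span
  have hDinfY : Dinf ⊆ (Y : Set X) := by rw [hYset]; exact subset_closure
  have hYdense : ∀ y ∈ (Y : Set X), ∀ ε > 0, ∃ x ∈ Dinf, ‖y - x‖ < ε := by
    intro y hy ε hε
    have h1 : y ∈ closure Dinf := hYset ▸ hy
    rw [Metric.mem_closure_iff] at h1
    obtain ⟨x, hx1, hx2⟩ := h1 ε hε
    exact ⟨x, hx1, by rwa [← dist_eq_norm]⟩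
  -- invariance of Y under Ginf
  have himg2 : ∀ T ∈ Ginf, ∀ p ∈ Dinf, (T : X ≃ₗᵢ[ℝ] X) p ∈ Dinf ∧ T.symm p ∈ Dinf := by
    intro T hT p hp
    obtain ⟨n, hn⟩ := Set.mem_iUnion.1 hT
    obtain ⟨m, hm⟩ := Set.mem_iUnion.1 hp
    have hT' : T ∈ Gn (max n m + 1) := hGmono (le_trans (le_max_left n m) (Nat.le_succ _)) hn
    have hp' : p ∈ Dn (max n m) := hDmono (le_max_right n m) hm
    obtain ⟨h1, h2⟩ := himgmem (max n m) T hT' p hp'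
    exact ⟨Set.mem_iUnion.2 ⟨max n m + 1, h1⟩, Set.mem_iUnion.2 ⟨max n m + 1, h2⟩⟩
  have hinv : ∀ T ∈ Ginf, (T : X ≃ₗᵢ[ℝ] X) '' (Y : Set X) = (Y : Set X) := by
    intro T hT
    have himcl : ∀ S : X ≃ₗᵢ[ℝ] X, (∀ p ∈ Dinf, S p ∈ Dinf) →
        ⇑S '' (Y : Set X) ⊆ (Y : Set X) := by
      intro S hS
      rw [hYset]
      have heq : ⇑S '' closure Dinf = closure (⇑S '' Dinf) := by
        have := (S.toHomeomorph).image_closure Dinf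
        simpa using this
      rw [heq]
      apply closure_mono
      rintro _ ⟨p, hp, rfl⟩
      exact hS p hp
    have h1 : ⇑T '' (Y : Set X) ⊆ (Y : Set X) :=
      himcl T (fun p hp => (himg2 T hT p hp).1)
    have h2 : ⇑T.symm '' (Y : Set X) ⊆ (Y : Set X) :=
      himcl T.symm (fun p hp => (himg2 T hT p hp).2)
    apply Set.Subset.antisymm h1
    intro q hq
    refine ⟨T.symm q, h2 ⟨q, hq, rfl⟩, ?_⟩
    simp
  -- A ≤ Y
  have hD0Dinf : D0' ⊆ Dinf := by
    rw [← hD0eq, hDinf]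
    exact Set.subset_iUnion Dn 0
  have hAY : A ≤ Y := by
    intro a ha
    have h1 : a ∈ closure D0' := hD0'cl ha
    have h2 : a ∈ closure Dinf := closure_mono hD0Dinf h1
    show a ∈ (Y : Set X)
    rw [hYset]
    exact h2
  -- density character of Y
  have hup : densChar ↥Y ≤ κ := by
    have hdsub : Dense (Subtype.val ⁻¹' Dinf : Set ↥Y) := by
      intro x
      rw [closure_subtype]
      have himg : Subtype.val '' (Subtype.val ⁻¹' Dinf : Set ↥Y) = Dinf := by
        apply Set.image_preimage_eq_of_subset
        rw [Subtype.range_coe]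
        exact hDinfY
      rw [himg]
      exact hYset ▸ x.2
    exact le_trans (densChar_le_of_dense hdsub)
      (le_trans (mk_preimage_of_injective _ _ Subtype.val_injective) hDinfcard)
  have hlow : κ ≤ densChar ↥Y := by
    have hIA : Infinite ↥((A : Set X)) := by
      rw [Cardinal.infinite_iff]
      calc ℵ₀ ≤ κ := hκ
        _ = densChar ↥A := hdensA.symm
        _ ≤ #↥A := densChar_le_mk _
    have hIY : Infinite ↥((Y : Set X)) := by
      rw [Cardinal.infinite_iff]
      have := Cardinal.mk_le_mk_of_subset (show (A : Set X) ⊆ (Y : Set X) from hAY)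
      calc ℵ₀ ≤ #↥((A : Set X)) := Cardinal.infinite_iff.1 hIA
        _ ≤ #↥((Y : Set X)) := this
    have h2 : ℵ₀ ≤ densChar ↥((Y : Set X)) := aleph0_le_densChar
    have h1 : densChar ↥((A : Set X)) ≤ max ℵ₀ (densChar ↥((Y : Set X))) :=
      densChar_mono_subset (show (A : Set X) ⊆ (Y : Set X) from hAY)
    rw [max_eq_right h2] at h1
    calc κ = densChar ↥A := hdensA.symm
      _ ≤ densChar ↥((Y : Set X)) := h1
      _ = densChar ↥Y := rfl
  refine ⟨Y, Submodule.isClosed_topologicalClosure _, hAY, le_antisymm hup hlow, ?_, ?_⟩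
  · -- convex transitivity of Y
    intro y hy
    have hy' : ‖(y : X)‖ = 1 := hy
    apply Set.Subset.antisymm
    · refine closure_minimal (convexHull_min ?_ (convex_closedBall _ _))
        Metric.isClosed_closedBall
      rintro z ⟨T, hTG0, hTYimg, hzeq⟩
      rw [Metric.mem_closedBall, dist_zero_right]
      show ‖(z : X)‖ ≤ 1
      rw [hzeq, LinearIsometryEquiv.norm_map]
      exact le_of_eq hy'
    · intro z hz
      rw [Metric.mem_closedBall, dist_zero_right] at hz
      have hz' : ‖(z : X)‖ ≤ 1 := hz
      rw [Metric.mem_closure_iff]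
      intro ε hε
      obtain ⟨x, hxD, hxy⟩ := hYdense (y : X) y.2 (min (ε / 8) (1 / 2))
        (lt_min (by linarith) (by norm_num))
      have hxy8 : ‖(y : X) - x‖ < ε / 8 := lt_of_lt_of_le hxy (min_le_left _ _)
      have hxyhalf : ‖(y : X) - x‖ < 1 / 2 := lt_of_lt_of_le hxy (min_le_right _ _)
      have hxne : x ≠ 0 := by
        intro hc
        rw [hc, sub_zero, hy'] at hxyhalf
        linarith
      obtain ⟨z', hz'D, hzz'⟩ := hYdense (z : X) z.2 (ε / 8) (by linarith)
      obtain ⟨n₁, hn₁⟩ := Set.mem_iUnion.1 hxD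
      obtain ⟨n₂, hn₂⟩ := Set.mem_iUnion.1 hz'D
      have hxn : x ∈ Dn (max n₁ n₂) := hDmono (le_max_left _ _) hn₁
      have hz'n : z' ∈ Dn (max n₁ n₂) := hDmono (le_max_right _ _) hn₂
      obtain ⟨m, hm⟩ := exists_nat_one_div_lt (show (0 : ℝ) < ε / 4 by linarith)
      obtain ⟨hTG0, hlam0, hlam1, happrox⟩ := hwho x z' m hxne
      have hTGinf : ∀ i, Tf x z' m i ∈ Ginf := by
        intro i
        rw [hGinf]
        exact Set.mem_iUnion.2 ⟨max n₁ n₂ + 1, hTmem _ x z' m hxn hz'n i⟩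
      have hTYi : ∀ i, ⇑(Tf x z' m i) '' (Y : Set X) = (Y : Set X) :=
        fun i => hinv _ (hTGinf i)
      have hTyY : ∀ i, (Tf x z' m i) (y : X) ∈ Y := by
        intro i
        have h10 : (Tf x z' m i) (y : X) ∈ ⇑(Tf x z' m i) '' (Y : Set X) :=
          ⟨(y : X), y.2, rfl⟩
        rwa [hTYi i] at h10
      set w : ↥Y := ∑ i, Lf x z' m i • (⟨(Tf x z' m i) (y : X), hTyY i⟩ : ↥Y) with hwdef
      refine ⟨w, ?_, ?_⟩
      · refine Convex.sum_mem (convex_convexHull ℝ _) (fun i _ => hlam0 i) hlam1 ?_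
        intro i _
        exact subset_convexHull ℝ _ ⟨Tf x z' m i, hTG0 i, hTYi i, rfl⟩
      · have hwcoe : (w : X) = ∑ i, Lf x z' m i • (Tf x z' m i) (y : X) := by
          rw [hwdef]
          simp only [Submodule.coe_sum, SetLike.val_smul]
        have hdzw : dist z w = ‖(z : X) - (w : X)‖ := by
          rw [Subtype.dist_eq, dist_eq_norm]
        rw [hdzw, hwcoe]
        have est1 : ‖(z : X) - (max 1 ‖z'‖)⁻¹ • z'‖ ≤ 2 * ‖z' - (z : X)‖ := by
          have h11 := nlem2 (z : X) z' hz'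
          rwa [norm_sub_rev] at h11
        have est2 : ‖(∑ i, Lf x z' m i • (Tf x z' m i) (‖x‖⁻¹ • x)) -
            ∑ i, Lf x z' m i • (Tf x z' m i) (y : X)‖ ≤ ‖‖x‖⁻¹ • x - (y : X)‖ := by
          rw [← Finset.sum_sub_distrib]
          refine le_trans (norm_sum_le _ _) ?_
          have heach : ∀ i, ‖Lf x z' m i • (Tf x z' m i) (‖x‖⁻¹ • x) -
              Lf x z' m i • (Tf x z' m i) (y : X)‖ = Lf x z' m i * ‖‖x‖⁻¹ • x - (y : X)‖ := by
            intro i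
            rw [← smul_sub, norm_smul, Real.norm_of_nonneg (hlam0 i), ← map_sub,
              LinearIsometryEquiv.norm_map]
          rw [Finset.sum_congr rfl (fun i _ => heach i), ← Finset.sum_mul, hlam1, one_mul]
        have est3 : ‖‖x‖⁻¹ • x - (y : X)‖ ≤ 2 * ‖x - (y : X)‖ := nlem1 x (y : X) hy' hxne
        have hzrev : ‖z' - (z : X)‖ = ‖(z : X) - z'‖ := norm_sub_rev _ _
        have hxrev : ‖x - (y : X)‖ = ‖(y : X) - x‖ := norm_sub_rev _ _
        calc ‖(z : X) - ∑ i, Lf x z' m i • (Tf x z' m i) (y : X)‖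
            = ‖((z : X) - (max 1 ‖z'‖)⁻¹ • z') +
                (((max 1 ‖z'‖)⁻¹ • z' - ∑ i, Lf x z' m i • (Tf x z' m i) (‖x‖⁻¹ • x)) +
                  ((∑ i, Lf x z' m i • (Tf x z' m i) (‖x‖⁻¹ • x)) -
                    ∑ i, Lf x z' m i • (Tf x z' m i) (y : X)))‖ := by
              congr 1
              abel
          _ ≤ ‖(z : X) - (max 1 ‖z'‖)⁻¹ • z'‖ +
                (‖(max 1 ‖z'‖)⁻¹ • z' - ∑ i, Lf x z' m i • (Tf x z' m i) (‖x‖⁻¹ • x)‖ +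
                  ‖(∑ i, Lf x z' m i • (Tf x z' m i) (‖x‖⁻¹ • x)) -
                    ∑ i, Lf x z' m i • (Tf x z' m i) (y : X)‖) :=
              le_trans (norm_add_le _ _) (by gcongr; exact norm_add_le _ _)
          _ < ε := by linarith
  · -- density of C ∩ Y in the sphere of Y
    intro y hyY hy1
    rw [Metric.mem_closure_iff]
    intro ε hε
    obtain ⟨x, hxD, hxy⟩ := hYdense y hyY (min (ε / 8) (1 / 2))
      (lt_min (by linarith) (by norm_num))
    have hxy8 : ‖y - x‖ < ε / 8 := lt_of_lt_of_le hxy (min_le_left _ _)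
    have hxyhalf : ‖y - x‖ < 1 / 2 := lt_of_lt_of_le hxy (min_le_right _ _)
    have hxne : x ≠ 0 := by
      intro hc
      rw [hc, sub_zero, hy1] at hxyhalf
      linarith
    obtain ⟨m, hm⟩ := exists_nat_one_div_lt (show (0 : ℝ) < ε / 4 by linarith)
    obtain ⟨hc1, hc2⟩ := hcpt x m hxne
    obtain ⟨n, hn⟩ := Set.mem_iUnion.1 hxD
    have hcDinf : cpt x m ∈ Dinf := by
      rw [hDinf]
      exact Set.mem_iUnion.2 ⟨n + 1, hcptmem n x hn m⟩
    refine ⟨cpt x m, ⟨hc1, hDinfY hcDinf⟩, ?_⟩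
    rw [dist_eq_norm]
    have est : ‖‖x‖⁻¹ • x - y‖ ≤ 2 * ‖x - y‖ := nlem1 x y hy1 hxne
    have hxrev : ‖x - y‖ = ‖y - x‖ := norm_sub_rev _ _
    calc ‖y - cpt x m‖ = ‖(y - ‖x‖⁻¹ • x) + (‖x‖⁻¹ • x - cpt x m)‖ := by
          rw [sub_add_sub_cancel]
      _ ≤ ‖y - ‖x‖⁻¹ • x‖ + ‖‖x‖⁻¹ • x - cpt x m‖ := norm_add_le _ _
      _ < ε := by
          have h1 : ‖y - ‖x‖⁻¹ • x‖ ≤ 2 * ‖x - y‖ := by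
            rw [norm_sub_rev]
            exact est
          linarith
end

section
/- Let X be a σ-complete Banach lattice that is convex-transitive and such that every surjective linear isometry of X is disjointness-preserving. If X contains an atom x ∈ S_X, then X is one-dimensional. -/
section Helpers

variable {X : Type*} [NormedAddCommGroup X] [Lattice X] [HasSolidNorm X]
    [IsOrderedAddMonoid X]

/-- Subadditivity of the infimum against nonnegative elements. -/
lemma aux_inf_add_le (u v w : X) (hu : 0 ≤ u) (hv : 0 ≤ v) (hw : 0 ≤ w) :
    (u + v) ⊓ w ≤ u ⊓ w + v ⊓ w := by
  have key : (u + v) ⊓ w - u ⊓ w = ((u + v) ⊓ w - u) ⊔ ((u + v) ⊓ w - w) :=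
    sub_inf u w ((u + v) ⊓ w)
  have h1 : (u + v) ⊓ w - u ≤ v ⊓ w := by
    refine le_inf ?_ ?_
    · rw [sub_le_iff_le_add, add_comm]; exact inf_le_left
    · rw [sub_le_iff_le_add]
      exact le_trans inf_le_right (le_add_of_nonneg_right hu)
  have h2 : (u + v) ⊓ w - w ≤ v ⊓ w :=
    le_trans (sub_nonpos.2 inf_le_right) (le_inf hv hw)
  have h3 : (u + v) ⊓ w - u ⊓ w ≤ v ⊓ w := by
    rw [key]; exact sup_le h1 h2
  calc (u + v) ⊓ w = ((u + v) ⊓ w - u ⊓ w) + u ⊓ w := by abel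
  _ ≤ v ⊓ w + u ⊓ w := add_le_add_left h3 _
  _ = u ⊓ w + v ⊓ w := add_comm _ _

lemma aux_disj_add (u v w : X) (hu : 0 ≤ u) (hv : 0 ≤ v) (hw : 0 ≤ w)
    (h1 : u ⊓ w = 0) (h2 : v ⊓ w = 0) : (u + v) ⊓ w = 0 := by
  refine le_antisymm ?_ (le_inf (add_nonneg hu hv) hw)
  calc (u + v) ⊓ w ≤ u ⊓ w + v ⊓ w := aux_inf_add_le u v w hu hv hw
  _ = 0 := by rw [h1, h2, add_zero]

lemma aux_disj_nsmul (u w : X) (hu : 0 ≤ u) (hw : 0 ≤ w)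
    (h : u ⊓ w = 0) (n : ℕ) : (n • u) ⊓ w = 0 := by
  induction n with
  | zero => rw [zero_nsmul]; exact inf_eq_left.2 hw
  | succ n ih =>
      rw [succ_nsmul]
      exact aux_disj_add _ _ _ (nsmul_nonneg hu n) hu hw ih h

/-- Lattice-ordered groups are semiclosed: `0 ≤ n • u` implies `0 ≤ u`. -/
lemma aux_semiclosed (u : X) (n : ℕ) (hn : n ≠ 0) (h : 0 ≤ n • u) : 0 ≤ u := by
  have hd : u⁻ ⊓ (n • u⁺) = 0 := by
    rw [inf_comm]
    exact aux_disj_nsmul u⁺ u⁻ (posPart_nonneg u) (negPart_nonneg u)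
      (posPart_inf_negPart_eq_zero u) n
  have hsub : n • u⁺ - n • u⁻ = n • u := by
    rw [← smul_sub, posPart_sub_negPart]
  have h1 : n • u⁻ ≤ n • u⁺ := by
    rw [← sub_nonneg, hsub]; exact h
  have h2 : u⁻ ≤ n • u⁻ := by
    obtain ⟨m, rfl⟩ := Nat.exists_eq_succ_of_ne_zero hn
    rw [succ_nsmul]
    exact le_add_of_nonneg_left (nsmul_nonneg (negPart_nonneg u) m)
  have h3 : u⁻ = 0 := by
    have h4 : u⁻ ⊓ (n • u⁺) = u⁻ := inf_eq_left.2 (h2.trans h1)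
    rw [← h4, hd]
  exact negPart_eq_zero.1 h3

variable [NormedSpace ℝ X]

lemma aux_nat_smul_nonneg (n : ℕ) (w : X) (hw : 0 ≤ w) : 0 ≤ (n : ℝ) • w := by
  rw [Nat.cast_smul_eq_nsmul]
  exact nsmul_nonneg hw n

lemma aux_rat_smul_nonneg (q : ℚ) (hq : 0 ≤ q) (w : X) (hw : 0 ≤ w) :
    0 ≤ (q : ℝ) • w := by
  apply aux_semiclosed _ q.den q.den_nz
  have hkey : (q.den : ℕ) • ((q : ℝ) • w) = ((q.num.toNat : ℝ)) • w := by
    rw [← Nat.cast_smul_eq_nsmul ℝ, smul_smul]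
    congr 1
    have hden : (q.den : ℝ) ≠ 0 := by exact_mod_cast q.den_nz
    have hnum : (0:ℤ) ≤ q.num := Rat.num_nonneg.2 hq
    have hcast : ((q.num.toNat : ℕ) : ℝ) = ((q.num : ℤ) : ℝ) := by
      exact_mod_cast congrArg (fun z : ℤ => (z : ℝ)) (Int.toNat_of_nonneg hnum)
    rw [hcast, Rat.cast_def]
    field_simp
  rw [hkey]
  exact aux_nat_smul_nonneg _ _ hw

/-- Nonnegative real scalars preserve positivity (not an instance in this setting). -/
lemma aux_smul_nonneg {s : ℝ} (hs : 0 ≤ s) {w : X} (hw : 0 ≤ w) : 0 ≤ s • w := by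
  have hC : IsClosed {t : ℝ | 0 ≤ t • w} :=
    isClosed_nonneg.preimage (continuous_id.smul continuous_const)
  have hmem : ∀ n : ℕ, ∃ q : ℚ, s ≤ q ∧ (q : ℝ) < s + 1 / (n + 1) := by
    intro n
    obtain ⟨q, hq1, hq2⟩ := exists_rat_btwn (lt_add_of_pos_right s
      (by positivity : (0:ℝ) < 1 / (n + 1)))
    exact ⟨q, hq1.le, hq2⟩
  choose f hf1 hf2 using hmem
  have htend : Filter.Tendsto (fun n : ℕ => (f n : ℝ)) Filter.atTop (nhds s) := by
    refine tendsto_of_tendsto_of_tendsto_of_le_of_le tendsto_const_nhds ?_ hf1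
      (fun n => (hf2 n).le)
    have : Filter.Tendsto (fun n : ℕ => s + 1 / ((n : ℝ) + 1)) Filter.atTop (nhds (s + 0)) :=
      Filter.Tendsto.add tendsto_const_nhds tendsto_one_div_add_atTop_nhds_zero_nat
    simpa using this
  have hmemC : ∀ n, (f n : ℝ) ∈ {t : ℝ | 0 ≤ t • w} := by
    intro n
    have hq : (0:ℚ) ≤ f n := by
      have := hf1 n; exact_mod_cast hs.trans this
    exact aux_rat_smul_nonneg (f n) hq w hw
  have : s ∈ {t : ℝ | 0 ≤ t • w} := hC.mem_of_tendsto htend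
    (Filter.Eventually.of_forall hmemC)
  exact this

lemma aux_smul_le_smul {s t : ℝ} (hst : s ≤ t) {w : X} (hw : 0 ≤ w) : s • w ≤ t • w := by
  rw [← sub_nonneg, ← sub_smul]
  exact aux_smul_nonneg (by linarith) hw

lemma aux_abs_smul (s : ℝ) (w : X) (hw : 0 ≤ w) : |s • w| = |s| • w := by
  rcases le_total 0 s with h | h
  · rw [abs_of_nonneg (aux_smul_nonneg h hw), abs_of_nonneg h]
  · rw [← abs_neg, ← neg_smul, abs_of_nonneg (aux_smul_nonneg (by linarith) hw),
      abs_of_nonpos h]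

lemma aux_disj_smul (u w : X) (hu : 0 ≤ u) (hw : 0 ≤ w)
    (h : u ⊓ w = 0) (s : ℝ) (hs : 0 ≤ s) : u ⊓ (s • w) = 0 := by
  have h1 : s • w ≤ (⌈s⌉₊ : ℝ) • w := aux_smul_le_smul (Nat.le_ceil s) hw
  have h2 : u ⊓ ((⌈s⌉₊ : ℝ) • w) = 0 := by
    rw [Nat.cast_smul_eq_nsmul, inf_comm]
    rw [inf_comm] at h
    exact aux_disj_nsmul _ _ hw hu h _
  refine le_antisymm ?_ (le_inf hu (aux_smul_nonneg hs hw))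
  calc u ⊓ (s • w) ≤ u ⊓ ((⌈s⌉₊ : ℝ) • w) := inf_le_inf_left u h1
  _ = 0 := h2

/-- For disjoint elements, `|u + v| = |u| + |v|`. -/
lemma aux_abs_add_disj (u v : X) (h : |u| ⊓ |v| = 0) : |u + v| = |u| + |v| := by
  refine le_antisymm (abs_add_le u v) ?_
  have h1 : |(|u| - |v|)| ≤ |u + v| := by
    have := abs_abs_sub_abs_le u (-v)
    rwa [abs_neg, sub_neg_eq_add] at this
  have h2 : |(|u| - |v|)| = |u| + |v| := by
    have h3 : |v| ⊔ |u| - |v| ⊓ |u| = |(|u| - |v|)| := sup_sub_inf_eq_abs_sub |v| |u|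
    have h4 : |v| ⊓ |u| + (|v| ⊔ |u|) = |v| + |u| := inf_add_sup |v| |u|
    rw [inf_comm (a := |v|) (b := |u|), h, sub_zero] at h3
    rw [inf_comm (a := |v|) (b := |u|), h, zero_add] at h4
    rw [← h3, h4, add_comm]
  exact h2 ▸ h1

end Helpers

section Decomp

variable {X : Type*} [NormedAddCommGroup X] [Lattice X] [HasSolidNorm X]
    [IsOrderedAddMonoid X] [NormedSpace ℝ X]
variable {a : X}

/-- Existence of the band decomposition of a nonnegative element with respect to an atom. -/
lemma aux_decomp_nonneg (ha0 : 0 ≤ a) (hane : a ≠ 0)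
    (hA : ∀ v : X, 0 ≤ v → v ≤ a → ∃ t : ℝ, 0 ≤ t ∧ v = t • a)
    (z : X) (hz : 0 ≤ z) :
    ∃ t : ℝ, ∃ r : X, 0 ≤ t ∧ 0 ≤ r ∧ z = t • a + r ∧ r ⊓ a = 0 := by
  have hna : 0 < ‖a‖ := norm_pos_iff.2 hane
  set S := {s : ℝ | 0 ≤ s ∧ s • a ≤ z} with hS
  have h0S : (0:ℝ) ∈ S := ⟨le_refl 0, by rw [zero_smul]; exact hz⟩
  have hbdd : BddAbove S := by
    refine ⟨‖z‖ / ‖a‖, fun s hs => ?_⟩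
    have h1 : |s • a| ≤ |z| := by
      rw [aux_abs_smul s a ha0, abs_of_nonneg hz, abs_of_nonneg hs.1]
      exact hs.2
    have h2 : ‖s • a‖ ≤ ‖z‖ := norm_le_norm_of_abs_le_abs h1
    rw [norm_smul, Real.norm_eq_abs, abs_of_nonneg hs.1] at h2
    rw [le_div_iff₀ hna]
    exact h2
  have hclosed : IsClosed S := by
    have hSeq : S = Set.Ici (0:ℝ) ∩ ((fun s : ℝ => s • a) ⁻¹' Set.Iic z) := by
      ext s
      simp only [hS, Set.mem_setOf_eq, Set.mem_inter_iff, Set.mem_Ici, Set.mem_preimage,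
        Set.mem_Iic]
    rw [hSeq]
    exact isClosed_Ici.inter (isClosed_Iic.preimage (continuous_id.smul continuous_const))
  have hne : S.Nonempty := ⟨0, h0S⟩
  have htS : sSup S ∈ S := hclosed.csSup_mem hne hbdd
  set t := sSup S with ht
  have hr0 : 0 ≤ z - t • a := sub_nonneg.2 htS.2
  refine ⟨t, z - t • a, htS.1, hr0, by abel, ?_⟩
  obtain ⟨c, hc0, hc⟩ := hA ((z - t • a) ⊓ a) (le_inf hr0 ha0) inf_le_right
  rcases eq_or_lt_of_le hc0 with hc0' | hc0'
  · rw [hc, ← hc0', zero_smul]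
  · exfalso
    have h1 : c • a ≤ z - t • a := hc ▸ inf_le_left
    have h2 : (t + c) • a ≤ z := by
      rw [add_smul]
      have := add_le_add_right h1 (t • a)
      rw [add_sub_cancel] at this
      exact this
    have h3 : t + c ∈ S := ⟨by linarith [htS.1], h2⟩
    have h4 := le_csSup hbdd h3
    linarith

/-- Uniqueness of the band decomposition with respect to an atom. -/
lemma aux_decomp_unique (ha0 : 0 ≤ a) (hane : a ≠ 0)
    {t t' : ℝ} {r r' : X} (hr : |r| ⊓ a = 0) (hr' : |r'| ⊓ a = 0)
    (heq : t • a + r = t' • a + r') : t = t' ∧ r = r' := by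
  have h1 : (t - t') • a = r' - r := by
    rw [sub_smul]
    exact sub_eq_sub_iff_add_eq_add.2 (heq.trans (add_comm _ _))
  have h2 : (|t - t'| • a) ⊓ a = 0 := by
    have habs : |(t - t') • a| = |t - t'| • a := aux_abs_smul _ _ ha0
    have hsub : |r' - r| ≤ |r'| + |r| := by
      calc |r' - r| = |r' + -r| := by rw [sub_eq_add_neg]
      _ ≤ |r'| + |-r| := abs_add_le _ _
      _ = |r'| + |r| := by rw [abs_neg]
    have hle : (|t - t'| • a) ⊓ a ≤ (|r'| + |r|) ⊓ a := by
      rw [← habs, h1]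
      exact inf_le_inf_right a hsub
    have hle2 : (|r'| + |r|) ⊓ a ≤ |r'| ⊓ a + |r| ⊓ a :=
      aux_inf_add_le _ _ _ (abs_nonneg _) (abs_nonneg _) ha0
    rw [hr, hr', add_zero] at hle2
    exact le_antisymm (hle.trans hle2)
      (le_inf (aux_smul_nonneg (abs_nonneg _) ha0) ha0)
  have htt : t = t' := by
    by_contra hne
    have hcpos : 0 < |t - t'| := abs_pos.2 (sub_ne_zero.2 hne)
    rcases le_total (|t - t'|) 1 with hc1 | hc1
    · have : |t - t'| • a ≤ a := by
        have := aux_smul_le_smul hc1 ha0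
        rwa [one_smul] at this
      rw [inf_eq_left.2 this] at h2
      rcases smul_eq_zero.1 h2 with h | h
      · exact absurd h (ne_of_gt hcpos)
      · exact hane h
    · have : a ≤ |t - t'| • a := by
        have := aux_smul_le_smul hc1 ha0
        rwa [one_smul] at this
      rw [inf_eq_right.2 this] at h2
      exact hane h2
  refine ⟨htt, ?_⟩
  rw [htt] at heq
  exact (add_right_injective _ heq).symm ▸ by
    have := add_left_cancel heq
    exact this.symm ▸ rfl

/-- Existence of the band decomposition of an arbitrary element. -/
lemma aux_decomp (ha0 : 0 ≤ a) (hane : a ≠ 0)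
    (hA : ∀ v : X, 0 ≤ v → v ≤ a → ∃ t : ℝ, 0 ≤ t ∧ v = t • a)
    (z : X) : ∃ t : ℝ, ∃ r : X, z = t • a + r ∧ |r| ⊓ a = 0 := by
  obtain ⟨t₁, r₁, ht₁, hr₁, hz₁, hd₁⟩ := aux_decomp_nonneg ha0 hane hA z⁺ (posPart_nonneg z)
  obtain ⟨t₂, r₂, ht₂, hr₂, hz₂, hd₂⟩ := aux_decomp_nonneg ha0 hane hA z⁻ (negPart_nonneg z)
  refine ⟨t₁ - t₂, r₁ - r₂, ?_, ?_⟩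
  · rw [sub_smul]
    have : z = z⁺ - z⁻ := (posPart_sub_negPart z).symm
    rw [this, hz₁, hz₂]
    abel
  · have hsub : |r₁ - r₂| ≤ r₁ + r₂ := by
      calc |r₁ - r₂| = |r₁ + -r₂| := by rw [sub_eq_add_neg]
      _ ≤ |r₁| + |-r₂| := abs_add_le _ _
      _ = r₁ + r₂ := by rw [abs_neg, abs_of_nonneg hr₁, abs_of_nonneg hr₂]
    have h0 : (r₁ + r₂) ⊓ a = 0 := aux_disj_add _ _ _ hr₁ hr₂ ha0 hd₁ hd₂
    refine le_antisymm ?_ (le_inf (abs_nonneg _) ha0)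
    calc |r₁ - r₂| ⊓ a ≤ (r₁ + r₂) ⊓ a := inf_le_inf_right a hsub
    _ = 0 := h0

end Decomp

section Transfer

variable {X : Type*} [NormedAddCommGroup X] [Lattice X] [HasSolidNorm X]
    [IsOrderedAddMonoid X] [NormedSpace ℝ X]

lemma aux_abs_smul_le (s : ℝ) (w : X) : |s • w| ≤ |s| • |w| := by
  have key : ∀ (t : ℝ) (u : X), t • u ≤ |t| • |u| := by
    intro t u
    rcases le_total 0 t with h | h
    · rw [abs_of_nonneg h, ← sub_nonneg, ← smul_sub]
      exact aux_smul_nonneg h (sub_nonneg.2 (le_abs_self u))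
    · rw [abs_of_nonpos h]
      have h1 : (-t) • (-u) ≤ (-t) • |u| := by
        rw [← sub_nonneg, ← smul_sub]
        exact aux_smul_nonneg (by linarith) (sub_nonneg.2 (neg_le_abs u))
      rwa [smul_neg, neg_smul, neg_neg] at h1
  refine abs_le'.2 ⟨key s w, ?_⟩
  have := key (-s) w
  rwa [neg_smul, abs_neg] at this

lemma aux_abs_eq_zero' {w : X} (h : |w| = 0) : w = 0 := by
  have h1 : w ≤ 0 := h ▸ le_abs_self w
  have h2 : -w ≤ 0 := h ▸ neg_le_abs w
  exact le_antisymm h1 (by rwa [neg_nonpos] at h2)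

/-- A disjointness preserving surjective isometry maps a normalized atom to plus or minus
a normalized atom. -/
lemma aux_transfer (T : X ≃ₗᵢ[ℝ] X)
    (hT : ∀ u v : X, |u| ⊓ |v| = 0 → |T u| ⊓ |T v| = 0)
    {b : X} (hb0 : 0 ≤ b) (hbn : ‖b‖ = 1)
    (hB : ∀ v : X, 0 ≤ v → v ≤ b → ∃ t : ℝ, 0 ≤ t ∧ v = t • b) :
    ∃ c : X, 0 ≤ c ∧ ‖c‖ = 1 ∧ (∀ v : X, 0 ≤ v → v ≤ c → ∃ t : ℝ, 0 ≤ t ∧ v = t • c) ∧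
      (T b = c ∨ T b = -c) := by
  have hbne : b ≠ 0 := by
    intro h
    rw [h, norm_zero] at hbn
    norm_num at hbn
  -- Step 1: every `0 ≤ v ≤ |T b|` is a real multiple of `T b`.
  have hmul : ∀ v : X, 0 ≤ v → v ≤ |T b| → ∃ t : ℝ, v = t • T b := by
    intro v hv0 hvle
    obtain ⟨t, r, hw, hr⟩ := aux_decomp hb0 hbne hB (T.symm v)
    have hrb : |T r| ⊓ |T b| = 0 := hT r b (by rwa [abs_of_nonneg hb0])
    have hv : v = t • T b + T r := by
      have h1 : T (T.symm v) = T (t • b + r) := congrArg T hw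
      rwa [T.apply_symm_apply, map_add, map_smul] at h1
    have hv_abs : |v| ≤ |T b| := by rwa [abs_of_nonneg hv0]
    have hd1 : |v| ⊓ |T r| = 0 := by
      refine le_antisymm ?_ (le_inf (abs_nonneg _) (abs_nonneg _))
      calc |v| ⊓ |T r| ≤ |T b| ⊓ |T r| := inf_le_inf_right _ hv_abs
      _ = |T r| ⊓ |T b| := inf_comm _ _
      _ = 0 := hrb
    have hd2 : |T r| ≤ |v| + |t| • |T b| := by
      have h1 : T r = v + -(t • T b) := by rw [hv]; abel
      calc |T r| = |v + -(t • T b)| := by rw [← h1]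
      _ ≤ |v| + |(-(t • T b))| := abs_add_le _ _
      _ = |v| + |t • T b| := by rw [abs_neg]
      _ ≤ |v| + |t| • |T b| := add_le_add_right (aux_abs_smul_le t (T b)) _
    have hd3 : (|t| • |T b|) ⊓ |T r| = 0 := by
      rw [inf_comm]
      exact aux_disj_smul _ _ (abs_nonneg _) (abs_nonneg _) hrb _ (abs_nonneg _)
    have hzero : |T r| = 0 := by
      have h3 : |T r| ⊓ (|v| + |t| • |T b|) = |T r| := inf_eq_left.2 hd2
      have h4 : (|v| + |t| • |T b|) ⊓ |T r| ≤ |v| ⊓ |T r| + (|t| • |T b|) ⊓ |T r| :=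
        aux_inf_add_le _ _ _ (abs_nonneg _) (aux_smul_nonneg (abs_nonneg _) (abs_nonneg _))
          (abs_nonneg _)
      rw [hd1, hd3, add_zero] at h4
      rw [inf_comm] at h4
      rw [h3] at h4
      exact le_antisymm h4 (abs_nonneg _)
    have hr0 : r = 0 := by
      have h5 : T r = 0 := aux_abs_eq_zero' hzero
      have h6 := congrArg T.symm h5
      rwa [T.symm_apply_apply, map_zero] at h6
    exact ⟨t, by rw [hv, hr0, map_zero, add_zero]⟩
  -- Step 2: `T b` has a definite sign.
  set p := (T b)⁺ with hp
  set n := (T b)⁻ with hn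
  have hpn : p ⊓ n = 0 := posPart_inf_negPart_eq_zero (T b)
  have habs : |T b| = p + n := (posPart_add_negPart (T b)).symm
  obtain ⟨t, ht⟩ := hmul p (posPart_nonneg _) (by
    rw [habs]; exact le_add_of_nonneg_right (negPart_nonneg _))
  have hTb : T b = p - n := (posPart_sub_negPart (T b)).symm
  have e1 : t • n = (t - 1) • p := by
    have h9 : p = t • p - t • n := by
      conv_lhs => rw [ht, hTb]
      rw [smul_sub]
    have h10 : p + t • n = t • p := eq_sub_iff_add_eq.1 h9
    rw [sub_smul, one_smul, ← h10]
    abel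
  have e2 : |t| • n = |t - 1| • p := by
    have h10 := congrArg (fun w => |w|) e1
    rwa [aux_abs_smul t n (negPart_nonneg _), aux_abs_smul (t-1) p (posPart_nonneg _)] at h10
  have hd : (|t| • n) ⊓ (|t - 1| • p) = 0 := by
    have h8 : n ⊓ (|t - 1| • p) = 0 := by
      rw [inf_comm] at hpn
      exact aux_disj_smul _ _ (negPart_nonneg _) (posPart_nonneg _) hpn _ (abs_nonneg _)
    rw [inf_comm]
    exact aux_disj_smul _ _ (aux_smul_nonneg (abs_nonneg _) (posPart_nonneg _))
      (negPart_nonneg _) (by rw [inf_comm]; exact h8) _ (abs_nonneg _)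
  have hz1 : |t| • n = 0 := by
    have h11 := hd
    rw [e2, inf_idem] at h11
    rw [e2, h11]
  have hz2 : |t - 1| • p = 0 := by rw [← e2, hz1]
  have hsign : T b = |T b| ∨ T b = -|T b| := by
    rcases smul_eq_zero.1 hz2 with h | h
    · have ht1 : t = 1 := by
        have h12 := abs_eq_zero.1 h
        linarith
      rcases smul_eq_zero.1 hz1 with h' | h'
      · exfalso
        rw [ht1] at h'
        norm_num at h'
      · left
        rw [hTb, h', sub_zero]
        exact (abs_of_nonneg (posPart_nonneg _)).symm
    · right
      rw [hTb, h, zero_sub, abs_neg, abs_of_nonneg (negPart_nonneg _)]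
  refine ⟨|T b|, abs_nonneg _, by rw [norm_abs_eq_norm, T.norm_map, hbn], ?_, hsign⟩
  intro v hv0 hvle
  obtain ⟨s, hs⟩ := hmul v hv0 hvle
  rcases hsign with hch | hch
  · rcases le_total 0 s with h | h
    · refine ⟨s, h, ?_⟩
      conv_lhs => rw [hs, hch]
    · refine ⟨0, le_refl 0, ?_⟩
      have hvn : v ≤ 0 := by
        rw [hs, hch, ← neg_nonneg, ← neg_smul]
        exact aux_smul_nonneg (by linarith) (abs_nonneg _)
      rw [zero_smul]
      exact le_antisymm hvn hv0
  · rcases le_total s 0 with h | h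
    · refine ⟨-s, by linarith, ?_⟩
      conv_lhs => rw [hs, hch]
      rw [smul_neg, ← neg_smul]
    · refine ⟨0, le_refl 0, ?_⟩
      have hvn : v ≤ 0 := by
        rw [hs, hch, smul_neg, ← neg_nonneg, neg_neg]
        exact aux_smul_nonneg h (abs_nonneg _)
      rw [zero_smul]
      exact le_antisymm hvn hv0

end Transfer

/-- Theorem 4.2 (with σ-completeness, cf. Section 4): a σ-complete convex-transitive Banach
lattice whose surjective linear isometries are all disjointness-preserving and which contains
an atom on the unit sphere is one-dimensional. -/
theorem stmt19 {X : Type*} [NormedAddCommGroup X] [Lattice X] [HasSolidNorm X]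
    [IsOrderedAddMonoid X] [NormedSpace ℝ X]
    [CompleteSpace X]
    (hsigma : ∀ s : Set X, s.Countable → s.Nonempty → BddAbove s → ∃ a : X, IsLUB s a)
    (hct : ∀ x : X, ‖x‖ = 1 →
      closure (convexHull ℝ {y : X | ∃ T : X ≃ₗᵢ[ℝ] X, y = T x}) =
        Metric.closedBall (0 : X) 1)
    (hdisj : ∀ T : X ≃ₗᵢ[ℝ] X, ∀ a b : X, |a| ⊓ |b| = 0 → |T a| ⊓ |T b| = 0)
    (x : X) (hx : ‖x‖ = 1)
    (hatom : ∀ v : X, 0 ≤ v → v ≤ |x| → ∃ t : ℝ, 0 ≤ t ∧ v = t • |x|) :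
    Module.rank ℝ X = 1 := by
  classical
  set a := |x| with ha
  have ha0 : 0 ≤ a := abs_nonneg x
  have hna : ‖a‖ = 1 := by rw [ha, norm_abs_eq_norm, hx]
  have hane : a ≠ 0 := by
    intro h
    rw [h, norm_zero] at hna
    norm_num at hna
  have hdec := aux_decomp ha0 hane hatom
  choose φ ρ hφρ hρ using hdec
  have huniq : ∀ (z : X) (t : ℝ) (r : X), z = t • a + r → |r| ⊓ a = 0 → φ z = t ∧ ρ z = r := by
    intro z t r h1 h2
    exact aux_decomp_unique ha0 hane (hρ z) h2 ((hφρ z).symm.trans h1)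
  have hbase := huniq a 1 0 (by rw [one_smul, add_zero])
    (by rw [abs_zero]; exact inf_eq_left.2 ha0)
  have hφa : φ a = 1 := hbase.1
  have hφdisj : ∀ z : X, |z| ⊓ a = 0 → φ z = 0 := fun z hz =>
    (huniq z 0 z (by rw [zero_smul, zero_add]) hz).1
  have hφadd : ∀ y z : X, φ (y + z) = φ y + φ z ∧ ρ (y + z) = ρ y + ρ z := by
    intro y z
    refine huniq _ _ _ ?_ ?_
    · conv_lhs => rw [hφρ y, hφρ z]
      rw [add_smul]
      abel
    · refine le_antisymm ?_ (le_inf (abs_nonneg _) ha0)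
      calc |ρ y + ρ z| ⊓ a ≤ (|ρ y| + |ρ z|) ⊓ a := inf_le_inf_right a (abs_add_le _ _)
      _ ≤ |ρ y| ⊓ a + |ρ z| ⊓ a := aux_inf_add_le _ _ _ (abs_nonneg _) (abs_nonneg _) ha0
      _ = 0 := by rw [hρ y, hρ z, add_zero]
  have hφsmul : ∀ (s : ℝ) (z : X), φ (s • z) = s * φ z ∧ ρ (s • z) = s • ρ z := by
    intro s z
    refine huniq _ _ _ ?_ ?_
    · conv_lhs => rw [hφρ z]
      rw [smul_add, smul_smul]
    · refine le_antisymm ?_ (le_inf (abs_nonneg _) ha0)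
      calc |s • ρ z| ⊓ a ≤ (|s| • |ρ z|) ⊓ a := inf_le_inf_right a (aux_abs_smul_le s _)
      _ = 0 := by
          rw [inf_comm]
          exact aux_disj_smul _ _ ha0 (abs_nonneg _) (by rw [inf_comm]; exact hρ z) _
            (abs_nonneg _)
  have hφneg : φ (-a) = -1 := by
    have h1 := (hφsmul (-1) a).1
    rw [neg_one_smul, hφa] at h1
    rw [h1]
    ring
  have hφnorm : ∀ z : X, |φ z| ≤ ‖z‖ := by
    intro z
    have hd : |φ z • a| ⊓ |ρ z| = 0 := by
      rw [aux_abs_smul _ _ ha0, inf_comm]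
      exact aux_disj_smul _ _ (abs_nonneg _) ha0 (hρ z) _ (abs_nonneg _)
    have habs2 : |z| = |φ z| • a + |ρ z| := by
      conv_lhs => rw [hφρ z]
      rw [aux_abs_add_disj _ _ hd, aux_abs_smul _ _ ha0]
    have h1 : |(|φ z| • a)| ≤ |z| := by
      rw [abs_of_nonneg (aux_smul_nonneg (abs_nonneg _) ha0), habs2]
      exact le_add_of_nonneg_right (abs_nonneg _)
    have h2 : ‖(|φ z| • a)‖ ≤ ‖z‖ := by
      rw [← norm_abs_eq_norm z]
      refine norm_le_norm_of_abs_le_abs ?_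
      rw [abs_abs]
      exact h1
    rw [norm_smul, Real.norm_eq_abs, abs_abs, hna, mul_one] at h2
    exact h2
  have hφsub : ∀ y z : X, φ (y - z) = φ y - φ z := by
    intro y z
    have h1 := (hφadd (y - z) z).1
    rw [sub_add_cancel] at h1
    linarith
  have hφcont : Continuous φ := by
    have hlip : LipschitzWith 1 φ := by
      refine LipschitzWith.of_dist_le_mul fun y z => ?_
      rw [Real.dist_eq, dist_eq_norm, NNReal.coe_one, one_mul, ← hφsub]
      exact hφnorm _
    exact hlip.continuous
  have hgen : ∀ (f : X → ℝ), Continuous f →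
      (∀ (u v : X) (p q : ℝ), 0 ≤ p → 0 ≤ q → p + q = 1 →
        f (p • u + q • v) ≤ p * f u + q * f v) →
      ∀ (M : ℝ) (z : X), ‖z‖ = 1 → (∀ T : X ≃ₗᵢ[ℝ] X, f (T z) ≤ M) →
      ∀ w : X, ‖w‖ ≤ 1 → f w ≤ M := by
    intro f hf hconv M z hz hM w hw
    have hC : Convex ℝ {w : X | f w ≤ M} := by
      intro u hu v hv p q hp hq hpq
      simp only [Set.mem_setOf_eq] at hu hv ⊢
      calc f (p • u + q • v) ≤ p * f u + q * f v := hconv u v p q hp hq hpq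
      _ ≤ p * M + q * M := add_le_add (mul_le_mul_of_nonneg_left hu hp)
          (mul_le_mul_of_nonneg_left hv hq)
      _ = M := by rw [← add_mul, hpq, one_mul]
    have hclosed : IsClosed {w : X | f w ≤ M} := isClosed_le hf continuous_const
    have hsub : {y : X | ∃ T : X ≃ₗᵢ[ℝ] X, y = T z} ⊆ {w : X | f w ≤ M} := by
      rintro y ⟨T, rfl⟩
      exact hM T
    have hball := hct z hz
    have hw' : w ∈ Metric.closedBall (0 : X) 1 := by
      rw [Metric.mem_closedBall, dist_zero_right]
      exact hw
    rw [← hball] at hw'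
    exact closure_minimal (convexHull_min hsub hC) hclosed hw'
  have hdich : ∀ c : X, 0 ≤ c → ‖c‖ = 1 →
      (∀ v : X, 0 ≤ v → v ≤ c → ∃ t : ℝ, 0 ≤ t ∧ v = t • c) → c ⊓ a = 0 ∨ c = a := by
    intro c hc0 hcn hC
    obtain ⟨s, hs0, hs⟩ := hatom (c ⊓ a) (le_inf hc0 ha0) inf_le_right
    obtain ⟨s', hs'0, hs'⟩ := hC (c ⊓ a) (le_inf hc0 ha0) inf_le_left
    rcases eq_or_ne s 0 with h | h
    · left
      rw [hs, h, zero_smul]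
    · right
      have hs'ne : s' ≠ 0 := by
        intro h'
        rw [h', zero_smul] at hs'
        rw [hs'] at hs
        rcases smul_eq_zero.1 hs.symm with h'' | h''
        · exact h h''
        · exact hane h''
      have hc : c = (s'⁻¹ * s) • a := by
        have h1 : s' • c = s • a := by rw [← hs', ← hs]
        calc c = (s'⁻¹ * s') • c := by rw [inv_mul_cancel₀ hs'ne, one_smul]
        _ = s'⁻¹ • (s' • c) := by rw [mul_smul]
        _ = s'⁻¹ • (s • a) := by rw [h1]
        _ = (s'⁻¹ * s) • a := by rw [smul_smul]
      have hpos : 0 ≤ s'⁻¹ * s := mul_nonneg (inv_nonneg.2 hs'0) hs0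
      have hcn2 : s'⁻¹ * s = 1 := by
        have h2 : ‖c‖ = |s'⁻¹ * s| * ‖a‖ := by rw [hc, norm_smul, Real.norm_eq_abs]
        rw [hcn, hna, mul_one, abs_of_nonneg hpos] at h2
        linarith
      rw [hc, hcn2, one_smul]
  have hmain : ∀ z : X, ρ z = 0 := by
    intro z₀
    by_contra hz₀
    have hTa : ∀ T : X ≃ₗᵢ[ℝ] X, ∃ c : X, 0 ≤ c ∧ ‖c‖ = 1 ∧
        (∀ v : X, 0 ≤ v → v ≤ c → ∃ t : ℝ, 0 ≤ t ∧ v = t • c) ∧ (T a = c ∨ T a = -c) :=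
      fun T => aux_transfer T (hdisj T) ha0 hna hatom
    have habspm : ∀ (c y : X), 0 ≤ c → (y = c ∨ y = -c) → |y| = c := by
      intro c y hc0 hy
      rcases hy with rfl | rfl
      · exact abs_of_nonneg hc0
      · rw [abs_neg]
        exact abs_of_nonneg hc0
    rcases Classical.em (∃ c : X, (0 ≤ c ∧ ‖c‖ = 1 ∧
        (∀ v : X, 0 ≤ v → v ≤ c → ∃ t : ℝ, 0 ≤ t ∧ v = t • c)) ∧ c ⊓ a = 0) with hex | hnex
    · obtain ⟨c, ⟨hc0, hcn, hcat⟩, hcd⟩ := hex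
      have hcane : φ c = 0 := hφdisj c (by rw [abs_of_nonneg hc0]; exact hcd)
      have hf1 : ∀ w : X, ‖w‖ ≤ 1 → |φ w| + ‖w - φ w • a‖ ≤ 1 := by
        refine hgen (fun w => |φ w| + ‖w - φ w • a‖)
          ((continuous_abs.comp hφcont).add
            ((continuous_id.sub (hφcont.smul continuous_const)).norm)) ?_ 1 a hna ?_
        · intro u v p q hp hq hpq
          show |φ (p • u + q • v)| + ‖(p • u + q • v) - φ (p • u + q • v) • a‖
            ≤ p * (|φ u| + ‖u - φ u • a‖) + q * (|φ v| + ‖v - φ v • a‖)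
          have hlin : φ (p • u + q • v) = p * φ u + q * φ v := by
            rw [(hφadd _ _).1, (hφsmul _ _).1, (hφsmul _ _).1]
          have hvec : (p • u + q • v) - φ (p • u + q • v) • a
              = p • (u - φ u • a) + q • (v - φ v • a) := by
            rw [hlin]
            module
          calc |φ (p • u + q • v)| + ‖(p • u + q • v) - φ (p • u + q • v) • a‖
              ≤ (p * |φ u| + q * |φ v|) + (p * ‖u - φ u • a‖ + q * ‖v - φ v • a‖) := by
                refine add_le_add ?_ ?_
                · rw [hlin]
                  refine (abs_add_le _ _).trans ?_
                  rw [abs_mul, abs_mul, abs_of_nonneg hp, abs_of_nonneg hq]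
                · rw [hvec]
                  refine (norm_add_le _ _).trans ?_
                  rw [norm_smul, norm_smul, Real.norm_eq_abs, Real.norm_eq_abs,
                    abs_of_nonneg hp, abs_of_nonneg hq]
          _ = p * (|φ u| + ‖u - φ u • a‖) + q * (|φ v| + ‖v - φ v • a‖) := by ring
        · intro T
          show |φ (T a)| + ‖T a - φ (T a) • a‖ ≤ 1
          obtain ⟨c', hc'0, hc'n, hc'at, hc'pm⟩ := hTa T
          rcases hdich c' hc'0 hc'n hc'at with hd0 | hceq
          · have hphi0 : φ (T a) = 0 :=
              hφdisj _ (by rw [habspm c' (T a) hc'0 hc'pm]; exact hd0)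
            rw [hphi0, abs_zero, zero_smul, sub_zero, zero_add, T.norm_map, hna]
          · rw [hceq] at hc'pm
            rcases hc'pm with h | h
            · rw [h, hφa, abs_one, one_smul, sub_self, norm_zero, add_zero]
            · rw [h, hφneg, abs_neg, abs_one, neg_one_smul, sub_neg_eq_add,
                neg_add_cancel, norm_zero, add_zero]
      set N := ‖a + c‖ with hN
      have hφac : φ (a + c) = 1 := by rw [(hφadd a c).1, hφa, hcane, add_zero]
      have hN1 : 1 ≤ N := by
        rw [hN, ← hna]
        refine norm_le_norm_of_abs_le_abs ?_
        rw [abs_of_nonneg ha0, abs_of_nonneg (add_nonneg ha0 hc0)]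
        exact le_add_of_nonneg_right hc0
      have hNpos : 0 < N := lt_of_lt_of_le one_pos hN1
      have hinv0 : (0:ℝ) ≤ N⁻¹ := inv_nonneg.2 hNpos.le
      have hw1 : ‖N⁻¹ • (a + c)‖ = 1 := by
        rw [norm_smul, Real.norm_eq_abs, abs_of_nonneg hinv0, ← hN,
          inv_mul_cancel₀ (ne_of_gt hNpos)]
      have hf1w := hf1 (N⁻¹ • (a + c)) (le_of_eq hw1)
      have hφw : φ (N⁻¹ • (a + c)) = N⁻¹ := by rw [(hφsmul _ _).1, hφac, mul_one]
      have hvecw : N⁻¹ • (a + c) - N⁻¹ • a = N⁻¹ • c := by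
        rw [smul_add]
        abel
      rw [hφw, hvecw, abs_of_nonneg hinv0, norm_smul, Real.norm_eq_abs,
        abs_of_nonneg hinv0, hcn, mul_one] at hf1w
      have hN2 : 2 ≤ N := by
        have h3 : 2 * N⁻¹ ≤ 1 := by linarith
        have h4 := mul_le_mul_of_nonneg_right h3 hNpos.le
        rw [one_mul, mul_assoc, inv_mul_cancel₀ (ne_of_gt hNpos), mul_one] at h4
        exact h4
      have hf2 : ∀ w : X, ‖w‖ ≤ 1 → |φ w| ≤ N⁻¹ := by
        refine hgen (fun w => |φ w|) (continuous_abs.comp hφcont) ?_ N⁻¹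
          (N⁻¹ • (a + c)) hw1 ?_
        · intro u v p q hp hq hpq
          show |φ (p • u + q • v)| ≤ p * |φ u| + q * |φ v|
          rw [(hφadd _ _).1, (hφsmul _ _).1, (hφsmul _ _).1]
          refine (abs_add_le _ _).trans ?_
          rw [abs_mul, abs_mul, abs_of_nonneg hp, abs_of_nonneg hq]
        · intro T
          show |φ (T (N⁻¹ • (a + c)))| ≤ N⁻¹
          rw [map_smul, map_add, (hφsmul _ _).1, (hφadd _ _).1]
          obtain ⟨c₁, hc₁0, hc₁n, hc₁at, hc₁pm⟩ := hTa T
          obtain ⟨c₂, hc₂0, hc₂n, hc₂at, hc₂pm⟩ := aux_transfer T (hdisj T) hc0 hcn hcat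
          have hd12 : c₁ ⊓ c₂ = 0 := by
            have h0 : |a| ⊓ |c| = 0 := by
              rw [abs_of_nonneg ha0, abs_of_nonneg hc0, inf_comm]
              exact hcd
            have h1 := hdisj T a c h0
            rwa [habspm c₁ (T a) hc₁0 hc₁pm, habspm c₂ (T c) hc₂0 hc₂pm] at h1
          have hkey : |φ (T a)| + |φ (T c)| ≤ 1 := by
            rcases hdich c₁ hc₁0 hc₁n hc₁at with hd0 | hceq
            · have h0 : φ (T a) = 0 :=
                hφdisj _ (by rw [habspm c₁ (T a) hc₁0 hc₁pm]; exact hd0)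
              rw [h0, abs_zero, zero_add]
              calc |φ (T c)| ≤ ‖T c‖ := hφnorm _
              _ = 1 := by rw [T.norm_map, hcn]
            · have hc₂a : c₂ ⊓ a = 0 := by
                rw [← hceq, inf_comm]
                exact hd12
              have hφTc : φ (T c) = 0 :=
                hφdisj _ (by rw [habspm c₂ (T c) hc₂0 hc₂pm]; exact hc₂a)
              have hφTa : |φ (T a)| ≤ 1 := by
                refine (hφnorm _).trans ?_
                rw [T.norm_map, hna]
              rw [hφTc, abs_zero, add_zero]
              exact hφTa
          calc |N⁻¹ * (φ (T a) + φ (T c))| = N⁻¹ * |φ (T a) + φ (T c)| := by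
                rw [abs_mul, abs_of_nonneg hinv0]
          _ ≤ N⁻¹ * 1 := mul_le_mul_of_nonneg_left ((abs_add_le _ _).trans hkey) hinv0
          _ = N⁻¹ := mul_one _
      have hcontra := hf2 a (le_of_eq hna)
      rw [hφa, abs_one] at hcontra
      have hhalf : N⁻¹ ≤ 2⁻¹ := by
        refine inv_anti₀ (by norm_num) hN2
      linarith
    · push_neg at hnex
      have hf3 : ∀ w : X, ‖w‖ ≤ 1 → ‖w - φ w • a‖ ≤ 0 := by
        refine hgen (fun w => ‖w - φ w • a‖)
          ((continuous_id.sub (hφcont.smul continuous_const)).norm) ?_ 0 a hna ?_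
        · intro u v p q hp hq hpq
          show ‖(p • u + q • v) - φ (p • u + q • v) • a‖
            ≤ p * ‖u - φ u • a‖ + q * ‖v - φ v • a‖
          have hlin : φ (p • u + q • v) = p * φ u + q * φ v := by
            rw [(hφadd _ _).1, (hφsmul _ _).1, (hφsmul _ _).1]
          have hvec : (p • u + q • v) - φ (p • u + q • v) • a
              = p • (u - φ u • a) + q • (v - φ v • a) := by
            rw [hlin]
            module
          rw [hvec]
          refine (norm_add_le _ _).trans ?_
          rw [norm_smul, norm_smul, Real.norm_eq_abs, Real.norm_eq_abs,
            abs_of_nonneg hp, abs_of_nonneg hq]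
        · intro T
          show ‖T a - φ (T a) • a‖ ≤ 0
          obtain ⟨c', hc'0, hc'n, hc'at, hc'pm⟩ := hTa T
          have hceq : c' = a := by
            rcases hdich c' hc'0 hc'n hc'at with h | h
            · exact absurd h (hnex c' ⟨hc'0, hc'n, hc'at⟩)
            · exact h
          rw [hceq] at hc'pm
          rcases hc'pm with h | h
          · rw [h, hφa, one_smul, sub_self, norm_zero]
          · rw [h, hφneg, neg_one_smul, sub_neg_eq_add, neg_add_cancel, norm_zero]
      have hρz0 : |ρ z₀| ⊓ a = 0 := hρ z₀
      have hnρ : 0 < ‖ρ z₀‖ := norm_pos_iff.2 hz₀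
      have hun : ‖(‖ρ z₀‖⁻¹ • ρ z₀ : X)‖ = 1 := by
        rw [norm_smul, Real.norm_eq_abs, abs_of_nonneg (inv_nonneg.2 hnρ.le),
          inv_mul_cancel₀ (ne_of_gt hnρ)]
      have hφu : φ (‖ρ z₀‖⁻¹ • ρ z₀) = 0 := by
        rw [(hφsmul _ _).1, hφdisj (ρ z₀) hρz0, mul_zero]
      have h5 := hf3 (‖ρ z₀‖⁻¹ • ρ z₀) (le_of_eq hun)
      rw [hφu, zero_smul, sub_zero, hun] at h5
      linarith
  refine rank_eq_one a hane fun w => ⟨φ w, ?_⟩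
  have h1 := hφρ w
  rw [hmain w, add_zero] at h1
  exact h1.symm
end
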